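/- arXiv:1712.01704 — 4 statements merged into one kernel-verified Lean document; each statement's English description precedes it below -/
import Mathlib

section
/- Fix n ≥ 1. For a permutation π of Fin n, let U_π be the complex matrix indexed by functions f, g : Fin n → Fin 2 with (U_π)_{f,g} = 1 if g = f ∘ π and 0 otherwise (the qubit permutation operator). Let E = {e₁,…,e_c} be subsets of Fin n, each of size at least 2, and for each m let π_m be a cyclic permutation whose support is exactly e_m. Let σ : ℕ → {1,…,c} be a periodic schedule attaining every value in each period, and let ρ(0) be a density matrix (positive semidefinite, trace one) indexed by Fin n → Fin 2, evolving by ρ(t+1) = (1/|e_{σ(t)}|) Σ_{τ=1}^{|e_{σ(t)}|} U_{π_{σ(t)}^τ}† ρ(t) U_{π_{σ(t)}^τ}. Then ρ(t) converges and lim_{t→∞} ρ(t) = (1/|S_E|) Σ_{π ∈ S_E} U_π† ρ(0) U_π, where S_E is the subgroup of the permutation group of Fin n generated by {π₁, …, π_c}. -/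
open Matrix Finset Filter
open scoped Classical ComplexOrder

/-- The qubit permutation operator `U_π` on the `2ⁿ`-dimensional `n`-qubit space:
`(U_π)_{f,g} = 1` if `g = f ∘ π` and `0` otherwise. -/
noncomputable def permU (n : ℕ) (π : Equiv.Perm (Fin n)) :
    Matrix (Fin n → Fin 2) (Fin n → Fin 2) ℂ :=
  Matrix.of fun f g => if g = f ∘ π then 1 else 0

namespace QCGaux

section Conv

variable {Γ : Type*} [Group Γ] [Fintype Γ]

noncomputable def delta1 : Γ → ℝ := fun x => if x = 1 then 1 else 0

noncomputable def conv (f g : Γ → ℝ) : Γ → ℝ := fun x => ∑ a, f a * g (a⁻¹ * x)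

lemma sum_shift (g : Γ → ℝ) (a : Γ) : ∑ x, g (a⁻¹ * x) = ∑ x, g x :=
  Fintype.sum_equiv (Equiv.mulLeft a⁻¹) _ _ fun x => rfl

lemma delta1_sum : ∑ x : Γ, delta1 x = 1 := by simp [delta1]

lemma delta1_nonneg (x : Γ) : 0 ≤ delta1 x := by
  unfold delta1; split <;> norm_num

lemma delta1_one_pos : 0 < delta1 (1 : Γ) := by simp [delta1]

lemma conv_delta1_right (f : Γ → ℝ) : conv f delta1 = f := by
  funext x
  unfold conv delta1
  simp [inv_mul_eq_one, mul_ite]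

lemma conv_nonneg {f g : Γ → ℝ} (hf : ∀ x, 0 ≤ f x) (hg : ∀ x, 0 ≤ g x) (x : Γ) :
    0 ≤ conv f g x :=
  Finset.sum_nonneg fun a _ => mul_nonneg (hf a) (hg _)

lemma conv_sum (f g : Γ → ℝ) : ∑ x, conv f g x = (∑ x, f x) * (∑ x, g x) := by
  unfold conv
  rw [Finset.sum_comm]
  simp_rw [← Finset.mul_sum, sum_shift, ← Finset.sum_mul]

lemma sum_shift' (g : Γ → ℝ) (x : Γ) : ∑ a, g (a⁻¹ * x) = ∑ a, g a :=
  Fintype.sum_equiv ((Equiv.inv Γ).trans (Equiv.mulRight x)) _ _ fun a => rfl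

lemma conv_assoc (f g h : Γ → ℝ) : conv (conv f g) h = conv f (conv g h) := by
  funext x
  unfold conv
  simp_rw [Finset.sum_mul]
  rw [Finset.sum_comm]
  refine Finset.sum_congr rfl fun a _ => ?_
  rw [Finset.mul_sum]
  refine (Fintype.sum_equiv (Equiv.mulLeft a) _ _ fun b => ?_).symm
  simp only [Equiv.coe_mulLeft, inv_mul_cancel_left, _root_.mul_inv_rev, mul_assoc]

lemma conv_pos {f g : Γ → ℝ} (hf : ∀ x, 0 ≤ f x) (hg : ∀ x, 0 ≤ g x)
    {a b : Γ} (ha : 0 < f a) (hb : 0 < g b) : 0 < conv f g (a * b) := by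
  unfold conv
  refine Finset.sum_pos' (fun i _ => mul_nonneg (hf i) (hg _)) ⟨a, Finset.mem_univ a, ?_⟩
  rw [inv_mul_cancel_left]
  exact mul_pos ha hb

lemma conv_pos_exists {f g : Γ → ℝ} (hf : ∀ x, 0 ≤ f x) (hg : ∀ x, 0 ≤ g x)
    {z : Γ} (hz : 0 < conv f g z) : ∃ a b, a * b = z ∧ 0 < f a ∧ 0 < g b := by
  by_contra hcon
  push_neg at hcon
  have : conv f g z ≤ 0 := by
    refine Finset.sum_nonpos fun a _ => ?_
    rcases eq_or_lt_of_le (hf a) with h1 | h1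
    · rw [← h1, zero_mul]
    rcases eq_or_lt_of_le (hg (a⁻¹ * z)) with h2 | h2
    · rw [← h2, mul_zero]
    exact absurd h2 (not_lt.2 (hcon a (a⁻¹ * z) (mul_inv_cancel_left a z) h1))
  linarith

noncomputable def Dfun (v : Γ → ℝ) : ℝ := ∑ x, |v x - (Fintype.card Γ : ℝ)⁻¹|

lemma Dfun_nonneg (v : Γ → ℝ) : 0 ≤ Dfun v :=
  Finset.sum_nonneg fun x _ => abs_nonneg _

lemma abs_sub_le_Dfun (v : Γ → ℝ) (x : Γ) : |v x - (Fintype.card Γ : ℝ)⁻¹| ≤ Dfun v := by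
  unfold Dfun
  exact Finset.single_le_sum (f := fun y => |v y - (Fintype.card Γ : ℝ)⁻¹|) (fun y _ => abs_nonneg _) (Finset.mem_univ x)

lemma eps_card_le {w : Γ → ℝ} (hw1 : ∑ x, w x = 1) {ε : ℝ} (hε : ∀ x, ε ≤ w x) :
    ε * Fintype.card Γ ≤ 1 := by
  have : (∑ _x : Γ, ε) ≤ ∑ x, w x := Finset.sum_le_sum (fun x _ => hε x : ∀ x ∈ Finset.univ, ε ≤ w x)
  rw [Finset.sum_const, Finset.card_univ, nsmul_eq_mul, hw1] at this
  linarith [this, mul_comm ε (Fintype.card Γ : ℝ)]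

lemma contract (ν w : Γ → ℝ) (hν1 : ∑ x, ν x = 1) (hw1 : ∑ x, w x = 1)
    (ε : ℝ) (hε : ∀ x, ε ≤ w x) :
    Dfun (conv ν w) ≤ (1 - ε * Fintype.card Γ) * Dfun ν := by
  have hN : (0 : ℝ) < Fintype.card Γ := by
    have : Nonempty Γ := ⟨1⟩
    exact_mod_cast Fintype.card_pos
  set κ : ℝ := (Fintype.card Γ : ℝ)⁻¹ with hκ
  have hκN : κ * Fintype.card Γ = 1 := inv_mul_cancel₀ hN.ne'
  have key : ∀ x, conv ν w x - κ = ∑ a, (ν a - κ) * (w (a⁻¹ * x) - ε) := by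
    intro x
    have h1 : ∑ a : Γ, w (a⁻¹ * x) = 1 := by rw [sum_shift', hw1]
    have expand : ∀ a : Γ, (ν a - κ) * (w (a⁻¹ * x) - ε)
        = ν a * w (a⁻¹ * x) - ε * ν a - κ * w (a⁻¹ * x) + κ * ε := fun a => by ring
    rw [Finset.sum_congr rfl fun a _ => expand a, Finset.sum_add_distrib,
      Finset.sum_sub_distrib, Finset.sum_sub_distrib, ← Finset.mul_sum, ← Finset.mul_sum,
      hν1, h1, Finset.sum_const, Finset.card_univ, nsmul_eq_mul]
    have h2 : (Fintype.card Γ : ℝ) * (κ * ε) = ε := by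
      rw [← mul_assoc, mul_comm (Fintype.card Γ : ℝ) κ, hκN, one_mul]
    show conv ν w x - κ = ∑ a, ν a * w (a⁻¹ * x) - ε * 1 - κ * 1 + _
    unfold conv
    linarith [h2]
  have hstep : ∀ a : Γ, ∑ x : Γ, (w (a⁻¹ * x) - ε) = 1 - ε * Fintype.card Γ := by
    intro a
    rw [Finset.sum_sub_distrib, sum_shift, hw1, Finset.sum_const, Finset.card_univ,
      nsmul_eq_mul, mul_comm]
  calc Dfun (conv ν w) = ∑ x, |∑ a, (ν a - κ) * (w (a⁻¹ * x) - ε)| := by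
        unfold Dfun; exact Finset.sum_congr rfl fun x _ => by rw [← key x]
    _ ≤ ∑ x, ∑ a, |ν a - κ| * (w (a⁻¹ * x) - ε) := by
        refine Finset.sum_le_sum fun x _ => ?_
        refine (Finset.abs_sum_le_sum_abs _ _).trans (le_of_eq ?_)
        refine Finset.sum_congr rfl fun a _ => ?_
        rw [abs_mul, abs_of_nonneg (sub_nonneg.2 (hε _))]
    _ = ∑ a, |ν a - κ| * ∑ x, (w (a⁻¹ * x) - ε) := by
        rw [Finset.sum_comm]; simp_rw [← Finset.mul_sum]
    _ = ∑ a, |ν a - κ| * (1 - ε * Fintype.card Γ) := by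
        exact Finset.sum_congr rfl fun a _ => by rw [hstep a]
    _ = (1 - ε * Fintype.card Γ) * Dfun ν := by
        rw [← Finset.sum_mul]; rw [mul_comm]; rfl

end Conv

section Cseq

variable {Γ : Type*} [Group Γ] [Fintype Γ]

/-- Iterated convolution of a schedule of measures, starting from the Dirac mass at `1`. -/
noncomputable def cseq (μ : ℕ → Γ → ℝ) : ℕ → Γ → ℝ
  | 0 => delta1
  | t + 1 => conv (cseq μ t) (μ t)

lemma cseq_add (μ : ℕ → Γ → ℝ) (t : ℕ) :
    ∀ s, cseq μ (t + s) = conv (cseq μ t) (cseq (fun r => μ (t + r)) s) := by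
  intro s
  induction s with
  | zero => simp [cseq, conv_delta1_right]
  | succ s IH =>
      show cseq μ (t + s + 1) = _
      rw [show cseq μ (t + s + 1) = conv (cseq μ (t + s)) (μ (t + s)) from rfl, IH,
        conv_assoc]
      rfl

lemma cseq_prob (μ : ℕ → Γ → ℝ) (hμ0 : ∀ t x, 0 ≤ μ t x) (hμ1 : ∀ t, ∑ x, μ t x = 1) :
    ∀ t, (∀ x, 0 ≤ cseq μ t x) ∧ ∑ x, cseq μ t x = 1 := by
  intro t
  induction t with
  | zero => exact ⟨delta1_nonneg, delta1_sum⟩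
  | succ t IH =>
      refine ⟨conv_nonneg IH.1 (hμ0 t), ?_⟩
      show ∑ x, conv (cseq μ t) (μ t) x = 1
      rw [conv_sum, IH.2, hμ1 t, one_mul]

lemma cseq_congr {μ μ' : ℕ → Γ → ℝ} (h : ∀ t, μ t = μ' t) (t : ℕ) :
    cseq μ t = cseq μ' t := by
  induction t with
  | zero => rfl
  | succ t IH => show conv _ _ = conv _ _; rw [IH, h t]

end Cseq

section PermU

lemma permU_one (n : ℕ) : permU n 1 = 1 := by
  ext f g
  simp [permU, Matrix.one_apply, eq_comm]

lemma permU_mul (n : ℕ) (a b : Equiv.Perm (Fin n)) :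
    permU n (a * b) = permU n a * permU n b := by
  ext f h
  simp only [permU, Matrix.mul_apply, Matrix.of_apply, ite_mul, one_mul, zero_mul]
  rw [Finset.sum_ite_eq' Finset.univ (f ∘ ⇑a) (fun g => if h = g ∘ ⇑b then (1:ℂ) else 0)]
  simp [Equiv.Perm.coe_mul, Function.comp_assoc]
  congr 1

end PermU

section Umeas

variable {n c : ℕ} (e : Fin c → Finset (Fin n)) (π : Fin c → Equiv.Perm (Fin n))
variable (G : Subgroup (Equiv.Perm (Fin n)))

/-- The uniform probability measure on `{π m, π m ^ 2, …, π m ^ |e m|}`, viewed as a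
measure on the subgroup `G`. -/
noncomputable def umeas (m : Fin c) : ↥G → ℝ :=
  fun x => ((e m).card : ℝ)⁻¹ *
    (((Finset.Icc 1 (e m).card).filter fun τ => π m ^ τ = (x : Equiv.Perm (Fin n))).card : ℝ)

lemma umeas_nonneg (m : Fin c) (x : ↥G) : 0 ≤ umeas e π G m x :=
  mul_nonneg (by positivity) (by positivity)

lemma umeas_sum (m : Fin c) (hk : 1 ≤ (e m).card) (hmem : ∀ τ : ℕ, π m ^ τ ∈ G) :
    ∑ x : ↥G, umeas e π G m x = 1 := by
  unfold umeas
  rw [← Finset.mul_sum]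
  have hfib : ∀ x : ↥G,
      (Finset.Icc 1 (e m).card).filter (fun τ => π m ^ τ = (x : Equiv.Perm (Fin n)))
        = (Finset.Icc 1 (e m).card).filter
            (fun τ => (⟨π m ^ τ, hmem τ⟩ : ↥G) = x) := by
    intro x
    apply Finset.filter_congr
    intro τ _
    simp [Subtype.ext_iff]
  have hcard : ∑ x : ↥G,
      ((((Finset.Icc 1 (e m).card).filter
        (fun τ => π m ^ τ = (x : Equiv.Perm (Fin n)))).card : ℝ))
      = ((Finset.Icc 1 (e m).card).card : ℝ) := by
    rw [← Nat.cast_sum]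
    congr 1
    simp_rw [hfib]
    exact (Finset.card_eq_sum_card_fiberwise
      (f := fun τ => (⟨π m ^ τ, hmem τ⟩ : ↥G)) (t := Finset.univ)
      (fun τ _ => Finset.mem_univ _)).symm
  rw [hcard, Nat.card_Icc]
  have h1 : (e m).card + 1 - 1 = (e m).card := by omega
  rw [h1]
  have hne : ((e m).card : ℝ) ≠ 0 := by
    have h2 : 0 < (e m).card := hk
    exact_mod_cast h2.ne'
  exact inv_mul_cancel₀ hne

lemma umeas_pos_one (m : Fin c) (hord : π m ^ (e m).card = 1) (hk : 1 ≤ (e m).card) :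
    0 < umeas e π G m 1 := by
  unfold umeas
  have hkpos : (0:ℝ) < (e m).card := by exact_mod_cast hk
  refine mul_pos (by positivity) ?_
  have hmem : (e m).card ∈ (Finset.Icc 1 (e m).card).filter
      (fun τ => π m ^ τ = ((1 : ↥G) : Equiv.Perm (Fin n))) := by
    simp [Finset.mem_Icc, hk, hord]
  have := Finset.card_pos.2 ⟨_, hmem⟩
  exact_mod_cast this

lemma umeas_pos_gen (m : Fin c) (hk : 1 ≤ (e m).card) (h : π m ∈ G) :
    0 < umeas e π G m ⟨π m, h⟩ := by
  unfold umeas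
  have hkpos : (0:ℝ) < (e m).card := by exact_mod_cast hk
  refine mul_pos (by positivity) ?_
  have hmem : 1 ∈ (Finset.Icc 1 (e m).card).filter
      (fun τ => π m ^ τ = ((⟨π m, h⟩ : ↥G) : Equiv.Perm (Fin n))) := by
    simp [Finset.mem_Icc, hk]
  have := Finset.card_pos.2 ⟨_, hmem⟩
  exact_mod_cast this

lemma cseq_succ {Γ : Type*} [Group Γ] [Fintype Γ] (μ : ℕ → Γ → ℝ) (t : ℕ) :
    cseq μ (t + 1) = conv (cseq μ t) (μ t) := rfl

end Umeas

end QCGaux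

open QCGaux

/-- Theorem 1(ii): the deterministic quantum clique-gossip algorithm converges, and its
limit is the average of `ρ(0)` over the unitary orbit of the subgroup `S_E` generated by the
cyclic permutations associated with the generalized edges. -/
theorem deterministic_quantum_clique_gossip_limit
    {n c : ℕ} (hn : 1 ≤ n)
    (e : Fin c → Finset (Fin n)) (he : ∀ m, 2 ≤ (e m).card)
    (π : Fin c → Equiv.Perm (Fin n))
    (hπ : ∀ m, (π m).IsCycle ∧ (π m).support = e m)
    (σ : ℕ → Fin c) (P : ℕ) (hP : 0 < P)
    (hperiodic : ∀ t, σ (t + P) = σ t)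
    (hattain : ∀ m : Fin c, ∃ s < P, σ s = m)
    (ρ : ℕ → Matrix (Fin n → Fin 2) (Fin n → Fin 2) ℂ)
    (hρpsd : (ρ 0).PosSemidef) (hρtr : (ρ 0).trace = 1)
    (hrec : ∀ t, ρ (t + 1) = ((e (σ t)).card : ℂ)⁻¹ •
      ∑ τ ∈ Finset.Icc 1 (e (σ t)).card,
        (permU n (π (σ t) ^ τ))ᴴ * ρ t * permU n (π (σ t) ^ τ)) :
    Tendsto ρ atTop (nhds
      ((Nat.card (Subgroup.closure (Set.range π)) : ℂ)⁻¹ •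
        ∑ g : Subgroup.closure (Set.range π),
          (permU n (g : Equiv.Perm (Fin n)))ᴴ * ρ 0 * permU n (g : Equiv.Perm (Fin n)))) := by
  classical
  set G : Subgroup (Equiv.Perm (Fin n)) := Subgroup.closure (Set.range π) with hG
  have hπG : ∀ m, π m ∈ G := fun m => Subgroup.subset_closure ⟨m, rfl⟩
  have hpow : ∀ m (τ : ℕ), π m ^ τ ∈ G := fun m τ => pow_mem (hπG m) τ
  have hord : ∀ m, π m ^ (e m).card = 1 := by
    intro m
    have h1 : orderOf (π m) = (e m).card := by
      rw [(hπ m).1.orderOf, (hπ m).2]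
    rw [← h1]; exact pow_orderOf_eq_one _
  have hk1 : ∀ m, 1 ≤ (e m).card := fun m => le_trans one_le_two (he m)
  set μ : ℕ → ↥G → ℝ := fun t => umeas e π G (σ t) with hμ
  have hμ0 : ∀ t x, 0 ≤ μ t x := fun t x => umeas_nonneg _ _ _ _ _
  have hμ1 : ∀ t, ∑ x, μ t x = 1 := fun t => umeas_sum e π G (σ t) (hk1 _) (hpow _)
  set cc : ℕ → ↥G → ℝ := cseq μ with hcc
  have hprob := cseq_prob μ hμ0 hμ1
  have hAd : ∀ (g h : Equiv.Perm (Fin n)),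
      (permU n h)ᴴ * ((permU n g)ᴴ * ρ 0 * permU n g) * permU n h
        = (permU n (g * h))ᴴ * ρ 0 * permU n (g * h) := by
    intro g h
    rw [permU_mul, Matrix.conjTranspose_mul]
    simp only [Matrix.mul_assoc]
  have hrep : ∀ t, ρ t = ∑ x : ↥G,
      ((cc t x : ℝ) : ℂ) •
        ((permU n (x : Equiv.Perm (Fin n)))ᴴ * ρ 0 * permU n (x : Equiv.Perm (Fin n))) := by
    intro t
    induction t with
    | zero =>
        rw [hcc]
        show ρ 0 = ∑ x : ↥G, ((delta1 x : ℝ) : ℂ) • _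
        unfold QCGaux.delta1
        simp only [apply_ite (fun r : ℝ => (r : ℂ)), ite_smul, Complex.ofReal_one,
          Complex.ofReal_zero, one_smul, zero_smul]
        rw [Finset.sum_ite_eq' Finset.univ (1 : ↥G)]
        simp [permU_one]
    | succ t IH =>
        rw [hrec t, IH]
        set k := (e (σ t)).card with hkdef
        have step1 : ∀ τ : ℕ,
            (permU n (π (σ t) ^ τ))ᴴ *
              (∑ x : ↥G, ((cc t x : ℝ) : ℂ) •
                ((permU n (x : Equiv.Perm (Fin n)))ᴴ * ρ 0 *
                  permU n (x : Equiv.Perm (Fin n)))) *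
              permU n (π (σ t) ^ τ)
            = ∑ x : ↥G, ((cc t x : ℝ) : ℂ) •
                ((permU n ((x : Equiv.Perm (Fin n)) * π (σ t) ^ τ))ᴴ * ρ 0 *
                  permU n ((x : Equiv.Perm (Fin n)) * π (σ t) ^ τ)) := by
          intro τ
          rw [Matrix.mul_sum, Matrix.sum_mul]
          refine Finset.sum_congr rfl fun x _ => ?_
          rw [Matrix.mul_smul, Matrix.smul_mul, hAd]
        conv_lhs => rw [Finset.sum_congr rfl fun τ _ => step1 τ, Finset.sum_comm]
        have step2 : ∀ x : ↥G,
            (∑ τ ∈ Finset.Icc 1 k, ((cc t x : ℝ) : ℂ) •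
              ((permU n ((x : Equiv.Perm (Fin n)) * π (σ t) ^ τ))ᴴ * ρ 0 *
                permU n ((x : Equiv.Perm (Fin n)) * π (σ t) ^ τ)))
            = ∑ y : ↥G,
                (((Finset.Icc 1 k).filter
                  (fun τ => x * (⟨π (σ t) ^ τ, hpow (σ t) τ⟩ : ↥G) = y)).card) •
                (((cc t x : ℝ) : ℂ) •
                  ((permU n (y : Equiv.Perm (Fin n)))ᴴ * ρ 0 *
                    permU n (y : Equiv.Perm (Fin n)))) := by
          intro x
          rw [← Finset.sum_fiberwise_of_maps_to
            (g := fun τ => x * (⟨π (σ t) ^ τ, hpow (σ t) τ⟩ : ↥G)) (t := Finset.univ)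
            (fun τ _ => Finset.mem_univ _)]
          refine Finset.sum_congr rfl fun y _ => ?_
          have hconst : ∀ τ ∈ (Finset.Icc 1 k).filter
              (fun τ => x * (⟨π (σ t) ^ τ, hpow (σ t) τ⟩ : ↥G) = y),
              ((cc t x : ℝ) : ℂ) •
                ((permU n ((x : Equiv.Perm (Fin n)) * π (σ t) ^ τ))ᴴ * ρ 0 *
                  permU n ((x : Equiv.Perm (Fin n)) * π (σ t) ^ τ))
              = ((cc t x : ℝ) : ℂ) •
                ((permU n (y : Equiv.Perm (Fin n)))ᴴ * ρ 0 *
                  permU n (y : Equiv.Perm (Fin n))) := by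
            intro τ hτ
            rw [Finset.mem_filter] at hτ
            have h2 : (x : Equiv.Perm (Fin n)) * π (σ t) ^ τ = (y : Equiv.Perm (Fin n)) := by
              rw [← hτ.2]; rfl
            rw [h2]
          rw [Finset.sum_congr rfl hconst, Finset.sum_const]
        conv_lhs => rw [Finset.sum_congr rfl fun x _ => step2 x]
        have step3 : ∀ y : ↥G, ((cc (t + 1) y : ℝ) : ℂ) •
              ((permU n (y : Equiv.Perm (Fin n)))ᴴ * ρ 0 * permU n (y : Equiv.Perm (Fin n)))
            = ∑ x : ↥G, ((cc t x * μ t (x⁻¹ * y) : ℝ) : ℂ) •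
              ((permU n (y : Equiv.Perm (Fin n)))ᴴ * ρ 0 *
                permU n (y : Equiv.Perm (Fin n))) := by
          intro y
          have h2 : cc (t + 1) y = ∑ x : ↥G, cc t x * μ t (x⁻¹ * y) := by
            rw [hcc, cseq_succ]; rfl
          rw [h2]
          push_cast
          rw [Finset.sum_smul]
        conv_rhs => rw [Finset.sum_congr rfl fun y _ => step3 y, Finset.sum_comm]
        have hfilter : ∀ (x y : ↥G), (Finset.Icc 1 k).filter
              (fun τ => x * (⟨π (σ t) ^ τ, hpow (σ t) τ⟩ : ↥G) = y)
            = (Finset.Icc 1 k).filter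
              (fun τ => π (σ t) ^ τ = ((x⁻¹ * y : ↥G) : Equiv.Perm (Fin n))) := by
          intro x y
          apply Finset.filter_congr
          intro τ _
          simp [Subtype.ext_iff, eq_inv_mul_iff_mul_eq]
        rw [Finset.smul_sum]
        refine Finset.sum_congr rfl fun x _ => ?_
        rw [Finset.smul_sum]
        refine Finset.sum_congr rfl fun y _ => ?_
        rw [hfilter x y, ← Nat.cast_smul_eq_nsmul ℂ, smul_smul, smul_smul]
        congr 1
        have hμval : μ t (x⁻¹ * y) = (k : ℝ)⁻¹ *
            ((((Finset.Icc 1 k).filter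
              (fun τ => π (σ t) ^ τ = ((x⁻¹ * y : ↥G) : Equiv.Perm (Fin n)))).card : ℝ)) := rfl
        rw [hμval]
        push_cast
        ring
  -- periodicity and blocks
  have hμper : ∀ r, μ (r + P) = μ r := fun r => by rw [hμ]; simp only [hperiodic r]
  have hshift : ∀ j r, μ (j * P + r) = μ r := by
    intro j
    induction j with
    | zero => intro r; simp
    | succ j IH =>
        intro r
        have h2 : (j + 1) * P + r = (j * P + r) + P := by ring
        rw [h2, hμper, IH]
  have hblock : ∀ j s, cc (j * P + s) = conv (cc (j * P)) (cc s) := by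
    intro j s
    rw [hcc, cseq_add]
    exact congrArg _ (cseq_congr (fun r => hshift j r) s)
  -- positivity of the coefficients
  have hμpos1 : ∀ t, 0 < μ t 1 := fun t => umeas_pos_one e π G (σ t) (hord _) (hk1 _)
  have hpos1 : ∀ t, 0 < cc t 1 := by
    intro t
    induction t with
    | zero => exact delta1_one_pos
    | succ t IH =>
        have h2 := conv_pos (hprob t).1 (hμ0 t) IH (hμpos1 t)
        rw [mul_one] at h2
        rw [hcc, cseq_succ]
        exact h2
  have hmono : ∀ t s (x : ↥G), 0 < cc t x → 0 < cc (t + s) x := by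
    intro t s
    induction s with
    | zero => intro x h; simpa using h
    | succ s IH =>
        intro x h
        have h2 := conv_pos (hprob (t + s)).1 (hμ0 (t + s)) (IH x h) (hμpos1 (t + s))
        rw [mul_one] at h2
        show 0 < cc ((t + s) + 1) x
        rw [hcc, cseq_succ]
        exact h2
  have hgen : ∀ m : Fin c, 0 < cc P ⟨π m, hπG m⟩ := by
    intro m
    obtain ⟨s, hsP, hsm⟩ := hattain m
    have hb : 0 < μ s ⟨π (σ s), hπG (σ s)⟩ := umeas_pos_gen e π G (σ s) (hk1 _) (hπG (σ s))
    rw [hsm] at hb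
    have h1 : 0 < cc (s + 1) ⟨π m, hπG m⟩ := by
      rw [hcc, cseq_succ]
      have h2 := conv_pos (hprob s).1 (hμ0 s) (hpos1 s) hb
      rw [one_mul] at h2
      exact h2
    have h3 : P = (s + 1) + (P - (s + 1)) := by omega
    rw [h3]
    exact hmono _ _ _ h1
  -- support sets
  set S : ℕ → Finset ↥G := fun k => Finset.univ.filter (fun x => 0 < cc (k * P) x) with hS
  have hmemS : ∀ k x, x ∈ S k ↔ 0 < cc (k * P) x := by
    intro k x; rw [hS]; simp
  have hSmono : ∀ k l, k ≤ l → S k ⊆ S l := by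
    intro k l hkl x hx
    rw [hmemS] at hx ⊢
    have h2 : l * P = k * P + (l - k) * P := by
      rw [← Nat.add_mul]; congr 1; omega
    rw [h2]
    exact hmono _ _ _ hx
  have hSmul : ∀ j k (x y : ↥G), x ∈ S j → y ∈ S k → x * y ∈ S (j + k) := by
    intro j k x y hx hy
    rw [hmemS] at hx hy ⊢
    have h2 : (j + k) * P = j * P + k * P := by ring
    rw [h2, hblock j (k * P)]
    exact conv_pos (hprob _).1 (hprob _).1 hx hy
  have hS1 : ∀ j (z : ↥G), z ∈ S (j + 1) → ∃ x y, x * y = z ∧ x ∈ S j ∧ y ∈ S 1 := by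
    intro j z hz
    rw [hmemS] at hz
    have h2 : (j + 1) * P = j * P + 1 * P := by ring
    rw [h2, hblock j (1 * P)] at hz
    obtain ⟨x, y, hxy, hx, hy⟩ := conv_pos_exists (hprob _).1 (hprob _).1 hz
    exact ⟨x, y, hxy, (hmemS _ _).2 hx, (hmemS _ _).2 hy⟩
  have hone : ∀ k, (1 : ↥G) ∈ S k := fun k => (hmemS _ _).2 (hpos1 _)
  -- pigeonhole: the supports stabilize
  have hexK : ∃ K, S K = S (K + 1) := by
    by_contra hcon
    push_neg at hcon
    have hcard : ∀ k, k + 1 ≤ (S k).card := by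
      intro k
      induction k with
      | zero => have h2 := Finset.card_pos.2 ⟨1, hone 0⟩; omega
      | succ k IH =>
          have hss : S k ⊂ S (k + 1) :=
            lt_of_le_of_ne (hSmono k (k + 1) (by omega)) (hcon k)
          have h2 := Finset.card_lt_card hss
          omega
    have h3 := hcard (Fintype.card ↥G)
    have h4 : (S (Fintype.card ↥G)).card ≤ Fintype.card ↥G := by
      rw [← Finset.card_univ]
      exact Finset.card_le_card (Finset.filter_subset _ _)
    omega
  obtain ⟨K, hK⟩ := hexK
  have hstab : ∀ i, S (K + i) = S K := by
    intro i
    induction i with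
    | zero => rfl
    | succ i IH =>
        refine Finset.Subset.antisymm ?_ (hSmono K (K + (i + 1)) (by omega))
        intro z hz
        obtain ⟨x, y, hxy, hx, hy⟩ := hS1 (K + i) z hz
        have hx' : x ∈ S K := IH ▸ hx
        have h5 : x * y ∈ S (K + 1) := hSmul K 1 x y hx' hy
        rw [hxy] at h5
        exact hK ▸ h5
  -- every element of G lies in the stable support
  have hSin : ∀ (x : ↥G), (∃ j, x ∈ S j) → x ∈ S K := by
    rintro x ⟨j, hj⟩
    rcases le_or_gt j K with h | h
    · exact hSmono j K h hj
    · have h2 : K + (j - K) = j := by omega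
      rw [← hstab (j - K), h2]
      exact hj
  have hpowS : ∀ (x : ↥G) (j : ℕ), x ∈ S j → ∀ i, x ^ i ∈ S (j * i) := by
    intro x j hx i
    induction i with
    | zero => simpa using hone 0
    | succ i IH =>
        have h2 := hSmul (j * i) j (x ^ i) x IH hx
        rw [← pow_succ] at h2
        have h3 : j * i + j = j * (i + 1) := by ring
        rw [h3] at h2
        exact h2
  have hQ : ∀ x : ↥G, ∃ j, x ∈ S j := by
    intro x
    have hx2 : (x : Equiv.Perm (Fin n)) ∈ Subgroup.closure (Set.range π) := by
      rw [← hG]; exact x.2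
    refine Subgroup.closure_induction
      (p := fun y hy => ∃ j, (⟨y, hG ▸ hy⟩ : ↥G) ∈ S j) ?_ ?_ ?_ ?_ hx2
    · rintro y ⟨m, rfl⟩
      refine ⟨1, ?_⟩
      rw [hmemS]
      simpa using hgen m
    · exact ⟨0, hone 0⟩
    · rintro y z hy hz ⟨j, hj⟩ ⟨k, hk⟩
      exact ⟨j + k, hSmul j k _ _ hj hk⟩
    · rintro y hy ⟨j, hj⟩
      set g : ↥G := ⟨y, hG ▸ hy⟩ with hg
      have hordg : 0 < orderOf g := orderOf_pos g
      have hinv : g ^ (orderOf g - 1) = g⁻¹ := by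
        refine (inv_eq_of_mul_eq_one_right ?_).symm
        rw [← pow_succ']
        have h2 : orderOf g - 1 + 1 = orderOf g := by omega
        rw [h2]
        exact pow_orderOf_eq_one g
      refine ⟨j * (orderOf g - 1), ?_⟩
      have h3 := hpowS g j hj (orderOf g - 1)
      rw [hinv] at h3
      exact h3
  have hfull : ∀ x : ↥G, 0 < cc ((K + 1) * P) x := by
    intro x
    have h2 : x ∈ S (K + 1) := hSmono K (K + 1) (by omega) (hSin x (hQ x))
    rw [hmemS] at h2
    exact h2
  -- the contraction estimate
  set M : ℕ := (K + 1) * P with hM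
  have hMpos : 0 < M := by positivity
  have hGne : (Finset.univ : Finset ↥G).Nonempty := ⟨1, Finset.mem_univ 1⟩
  set ε : ℝ := Finset.univ.inf' hGne (cc M) with hε
  have hεle : ∀ x, ε ≤ cc M x := fun x => Finset.inf'_le _ (Finset.mem_univ x)
  have hεpos : 0 < ε := by
    rw [hε, Finset.lt_inf'_iff]
    exact fun x _ => hfull x
  set N : ℕ := Fintype.card ↥G with hN
  have hNpos : 0 < N := Fintype.card_pos
  set r : ℝ := 1 - ε * N with hr
  have hr0 : 0 ≤ r := by
    rw [hr]
    have := eps_card_le (hprob M).2 hεle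
    linarith
  have hr1 : r < 1 := by
    rw [hr]
    have h2 : (0:ℝ) < ε * N := mul_pos hεpos (by exact_mod_cast hNpos)
    linarith
  have hDkey : ∀ j, Dfun (cc ((j + 1) * M)) ≤ r * Dfun (cc (j * M)) := by
    intro j
    have harith : (j + 1) * M = j * M + M := by ring
    have hbl : cc (j * M + M) = conv (cc (j * M)) (cc M) := by
      have h2 : j * M = (j * (K + 1)) * P := by rw [hM]; ring
      rw [h2, hblock (j * (K + 1)) M, ← h2]
    rw [harith, hbl]
    exact contract _ _ (hprob _).2 (hprob _).2 ε hεle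
  have hgeom : ∀ j, Dfun (cc (j * M)) ≤ r ^ j * Dfun (cc 0) := by
    intro j
    induction j with
    | zero => simp
    | succ j IH =>
        calc Dfun (cc ((j + 1) * M)) ≤ r * Dfun (cc (j * M)) := hDkey j
          _ ≤ r * (r ^ j * Dfun (cc 0)) := by
              exact mul_le_mul_of_nonneg_left IH hr0
          _ = r ^ (j + 1) * Dfun (cc 0) := by ring
  have hDmono : Antitone (fun t => Dfun (cc t)) := by
    refine antitone_nat_of_succ_le fun t => ?_
    have h2 := contract (cc t) (μ t) (hprob t).2 (hμ1 t) 0 (fun x => hμ0 t x)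
    rw [hcc, cseq_succ]
    simpa using h2
  have hDbound : ∀ t, Dfun (cc t) ≤ r ^ (t / M) * Dfun (cc 0) := fun t =>
    (hDmono (Nat.div_mul_le_self t M)).trans (hgeom (t / M))
  have hdiv : Tendsto (fun t : ℕ => t / M) atTop atTop :=
    Filter.tendsto_atTop_atTop.2 fun b =>
      ⟨b * M, fun t ht => (Nat.le_div_iff_mul_le hMpos).2 ht⟩
  have hrpow : Tendsto (fun t : ℕ => r ^ (t / M) * Dfun (cc 0)) atTop (nhds 0) := by
    have h2 := ((tendsto_pow_atTop_nhds_zero_of_lt_one hr0 hr1).comp hdiv).mul_const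
      (Dfun (cc 0))
    simpa using h2
  have hD0 : Tendsto (fun t => Dfun (cc t)) atTop (nhds 0) :=
    squeeze_zero (fun t => Dfun_nonneg _) hDbound hrpow
  have hcoef : ∀ x : ↥G, Tendsto (fun t => cc t x) atTop (nhds ((N : ℝ)⁻¹)) := by
    intro x
    have h1 : Tendsto (fun t => cc t x - (N : ℝ)⁻¹) atTop (nhds 0) := by
      refine squeeze_zero_norm (fun t => ?_) hD0
      rw [Real.norm_eq_abs]
      exact abs_sub_le_Dfun (cc t) x
    have h2 := h1.add (tendsto_const_nhds (x := (N : ℝ)⁻¹))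
    simpa using h2
  have hρlim : Tendsto ρ atTop (nhds (∑ x : ↥G, (((N : ℝ)⁻¹ : ℝ) : ℂ) •
      ((permU n (x : Equiv.Perm (Fin n)))ᴴ * ρ 0 * permU n (x : Equiv.Perm (Fin n))))) := by
    refine Tendsto.congr (fun t => (hrep t).symm) ?_
    refine tendsto_finset_sum _ fun x _ => ?_
    exact ((Complex.continuous_ofReal.tendsto _).comp (hcoef x)).smul_const _
  have hfinal : ((Nat.card ↥G : ℂ))⁻¹ •
      (∑ g : ↥G, (permU n (g : Equiv.Perm (Fin n)))ᴴ * ρ 0 * permU n (g : Equiv.Perm (Fin n)))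
      = ∑ x : ↥G, (((N : ℝ)⁻¹ : ℝ) : ℂ) •
        ((permU n (x : Equiv.Perm (Fin n)))ᴴ * ρ 0 * permU n (x : Equiv.Perm (Fin n))) := by
    rw [Finset.smul_sum]
    refine Finset.sum_congr rfl fun x _ => ?_
    congr 1
    rw [Nat.card_eq_fintype_card, ← hN]
    push_cast
    rfl
  rw [hfinal]
  exact hρlim
end

section
/- Let n ≥ 2 and 2 ≤ k ≤ n. Let 𝖶 be a random matrix distributed uniformly over the set of all clique-averaging matrices W_S = (1/k)·χ_S χ_Sᵀ + Σ_{j∉S} e_j e_jᵀ, where S ranges over all C(n,k) k-element subsets of {1,…,n}. Then 𝔼[𝖶ᵀ𝖶] = 𝔼[𝖶] = ((k−1)/(n(n−1)))·𝟙𝟙ᵀ + ((n−k+1)/n − (k−1)/(n(n−1)))·I_n. -/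
open Matrix Finset

/-- The clique-averaging matrix `W_S = (1/|S|)·χ_S χ_Sᵀ + Σ_{j∉S} e_j e_jᵀ`. -/
noncomputable def cliqueW (n : ℕ) (S : Finset (Fin n)) : Matrix (Fin n) (Fin n) ℝ :=
  (S.card : ℝ)⁻¹ •
      Matrix.vecMulVec (fun i => if i ∈ S then 1 else 0) (fun i => if i ∈ S then 1 else 0)
    + ∑ j ∈ Sᶜ, Matrix.vecMulVec (Pi.single j 1) (Pi.single j 1)

private lemma vmv_mul {n : ℕ} (a b c d : Fin n → ℝ) :
    vecMulVec a b * vecMulVec c d = (b ⬝ᵥ c) • vecMulVec a d := by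
  ext i j
  simp only [mul_apply, vecMulVec_apply, Matrix.smul_apply, dotProduct, smul_eq_mul, Finset.sum_mul]
  exact Finset.sum_congr rfl fun l _ => by ring

private lemma cliqueW_apply {n : ℕ} (S : Finset (Fin n)) (i j : Fin n) :
    cliqueW n S i j = (S.card : ℝ)⁻¹ * ((if i ∈ S then (1:ℝ) else 0) * (if j ∈ S then (1:ℝ) else 0))
      + (if i = j ∧ i ∉ S then (1:ℝ) else 0) := by
  simp only [cliqueW, Matrix.add_apply, Matrix.smul_apply, vecMulVec_apply, smul_eq_mul,
    Matrix.sum_apply]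
  congr 1
  have key : ∀ l ∈ Sᶜ, (Pi.single l 1 : Fin n → ℝ) i * (Pi.single l 1 : Fin n → ℝ) j
      = if l = i then (if i = j then (1:ℝ) else 0) else 0 := by
    intro l _
    rcases eq_or_ne l i with rfl | h
    · rcases eq_or_ne l j with rfl | hj <;> simp [Pi.single_apply, *]
    · simp [Pi.single_apply, h, Ne.symm h]
  rw [Finset.sum_congr rfl key, Finset.sum_ite_eq' Sᶜ i]
  by_cases h1 : i ∈ S <;> by_cases h2 : i = j <;> simp [*]

private lemma cliqueW_transpose {n : ℕ} (S : Finset (Fin n)) :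
    (cliqueW n S)ᵀ = cliqueW n S := by
  ext i j
  rw [Matrix.transpose_apply, cliqueW_apply, cliqueW_apply]
  rcases eq_or_ne i j with rfl | h
  · ring
  · have h1 : ¬(j = i ∧ j ∉ S) := fun hc => h hc.1.symm
    have h2 : ¬(i = j ∧ i ∉ S) := fun hc => h hc.1
    rw [if_neg h1, if_neg h2]
    ring

private lemma cliqueW_idem {n : ℕ} (S : Finset (Fin n)) (hS : S.Nonempty) :
    cliqueW n S * cliqueW n S = cliqueW n S := by
  have hcard : (S.card : ℝ) ≠ 0 := Nat.cast_ne_zero.mpr (Finset.card_ne_zero_of_mem hS.choose_spec)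
  simp only [cliqueW]
  set χ : Fin n → ℝ := fun i => if i ∈ S then 1 else 0 with hχ
  set B : Matrix (Fin n) (Fin n) ℝ :=
    ∑ j ∈ Sᶜ, vecMulVec (Pi.single j 1) (Pi.single j 1) with hB
  set c : ℝ := (S.card : ℝ)⁻¹ with hc
  have hχχ : χ ⬝ᵥ χ = (S.card : ℝ) := by
    simp only [dotProduct]
    have h1 : ∀ i, χ i * χ i = if i ∈ S then (1:ℝ) else 0 := fun i => by
      by_cases h : i ∈ S <;> simp [hχ, h]
    rw [Finset.sum_congr rfl fun i _ => h1 i]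
    simp [Finset.sum_ite_mem]
  have hχs : ∀ j ∈ Sᶜ, χ ⬝ᵥ Pi.single j 1 = 0 := fun j hj => by
    rw [dotProduct_single, mul_one]
    simp only [hχ]
    exact if_neg (Finset.mem_compl.mp hj)
  have hsχ : ∀ j ∈ Sᶜ, Pi.single j (1:ℝ) ⬝ᵥ χ = 0 := fun j hj => by
    rw [single_dotProduct, one_mul]
    simp only [hχ]
    exact if_neg (Finset.mem_compl.mp hj)
  have hss : ∀ j l : Fin n, Pi.single j (1:ℝ) ⬝ᵥ Pi.single l 1 = if j = l then 1 else 0 := by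
    intro j l
    rw [single_dotProduct, one_mul, Pi.single_apply]
  have e1 : (c • vecMulVec χ χ) * (c • vecMulVec χ χ) = c • vecMulVec χ χ := by
    rw [smul_mul_assoc, mul_smul_comm, vmv_mul, hχχ, smul_smul, smul_smul]
    congr 1
    rw [hc]
    field_simp
  have e2 : (c • vecMulVec χ χ) * B = 0 := by
    rw [smul_mul_assoc, hB, Finset.mul_sum]
    rw [Finset.sum_eq_zero fun j hj => by rw [vmv_mul, hχs j hj, zero_smul], smul_zero]
  have e3 : B * (c • vecMulVec χ χ) = 0 := by
    rw [mul_smul_comm, hB, Finset.sum_mul]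
    rw [Finset.sum_eq_zero fun j hj => by rw [vmv_mul, hsχ j hj, zero_smul], smul_zero]
  have e4 : B * B = B := by
    rw [hB, Finset.sum_mul_sum]
    refine Finset.sum_congr rfl fun j hj => ?_
    rw [Finset.sum_eq_single j (fun l hl hne => by rw [vmv_mul, hss, if_neg (Ne.symm hne), zero_smul])
      (fun h => absurd hj h)]
    rw [vmv_mul, hss, if_pos rfl, one_smul]
  rw [add_mul, mul_add, mul_add, e1, e2, e3, e4, add_zero, zero_add]

private lemma count_subset {n : ℕ} (k : ℕ) (T : Finset (Fin n)) (ht : T.card ≤ k) :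
    ((Finset.powersetCard k (Finset.univ : Finset (Fin n))).filter (fun S => T ⊆ S)).card
      = (n - T.card).choose (k - T.card) := by
  have : ((Finset.powersetCard k (Finset.univ : Finset (Fin n))).filter (fun S => T ⊆ S)).card
      = (Finset.powersetCard (k - T.card) Tᶜ).card := by
    refine Finset.card_nbij' (fun S => S \ T) (fun U => U ∪ T) ?_ ?_ ?_ ?_
    · intro S hS
      rw [Finset.mem_coe, Finset.mem_filter, Finset.mem_powersetCard] at hS
      obtain ⟨⟨_, hcard⟩, hTS⟩ := hS
      rw [Finset.mem_coe, Finset.mem_powersetCard]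
      refine ⟨fun x hx => ?_, ?_⟩
      · rw [Finset.mem_sdiff] at hx
        exact Finset.mem_compl.mpr hx.2
      · rw [Finset.card_sdiff_of_subset hTS, hcard]
    · intro U hU
      rw [Finset.mem_coe, Finset.mem_powersetCard] at hU
      obtain ⟨hUT, hcard⟩ := hU
      have hdisj : Disjoint U T := Finset.disjoint_left.mpr fun x hx =>
        Finset.mem_compl.mp (hUT hx)
      rw [Finset.mem_coe, Finset.mem_filter, Finset.mem_powersetCard]
      exact ⟨⟨Finset.subset_univ _, by rw [Finset.card_union_of_disjoint hdisj, hcard]; omega⟩,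
        Finset.subset_union_right⟩
    · intro S hS
      rw [Finset.mem_coe, Finset.mem_filter] at hS
      show S \ T ∪ T = S
      exact Finset.sdiff_union_of_subset hS.2
    · intro U hU
      rw [Finset.mem_coe, Finset.mem_powersetCard] at hU
      have hdisj : Disjoint U T := Finset.disjoint_left.mpr fun x hx =>
        Finset.mem_compl.mp (hU.1 hx)
      show (U ∪ T) \ T = U
      rw [Finset.union_sdiff_distrib, Finset.sdiff_self, Finset.union_empty,
        Finset.sdiff_eq_self_of_disjoint hdisj]
  rw [this, Finset.card_powersetCard, Finset.card_compl, Fintype.card_fin]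

/-- Key computation in the proof of Theorem 3: for `𝖶` uniform over the clique-averaging
matrices of the `C(n,k)` `k`-element subsets of `{1,…,n}`,
`𝔼[𝖶ᵀ𝖶] = 𝔼[𝖶] = ((k−1)/(n(n−1)))𝟙𝟙ᵀ + ((n−k+1)/n − (k−1)/(n(n−1)))I`. -/
theorem expected_cliqueW
    {n k : ℕ} (hn : 2 ≤ n) (hk : 2 ≤ k) (hkn : k ≤ n) :
    (n.choose k : ℝ)⁻¹ • (∑ S ∈ Finset.powersetCard k (Finset.univ : Finset (Fin n)),
        (cliqueW n S)ᵀ * cliqueW n S)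
      = (n.choose k : ℝ)⁻¹ • (∑ S ∈ Finset.powersetCard k (Finset.univ : Finset (Fin n)),
        cliqueW n S)
    ∧ (n.choose k : ℝ)⁻¹ • (∑ S ∈ Finset.powersetCard k (Finset.univ : Finset (Fin n)),
        cliqueW n S)
      = (((k : ℝ) - 1) / ((n : ℝ) * ((n : ℝ) - 1))) •
          Matrix.vecMulVec (fun _ => (1 : ℝ)) (fun _ => 1)
        + ((((n : ℝ) - (k : ℝ) + 1) / (n : ℝ) - ((k : ℝ) - 1) / ((n : ℝ) * ((n : ℝ) - 1))) •
          (1 : Matrix (Fin n) (Fin n) ℝ)) := by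
  have hn0 : (n : ℝ) ≠ 0 := Nat.cast_ne_zero.mpr (by omega)
  have hn1 : (n : ℝ) - 1 ≠ 0 := by
    have : (2 : ℝ) ≤ (n : ℝ) := by exact_mod_cast hn
    linarith
  have hk0 : (k : ℝ) ≠ 0 := Nat.cast_ne_zero.mpr (by omega)
  have hC0 : (n.choose k : ℝ) ≠ 0 := Nat.cast_ne_zero.mpr (Nat.choose_pos hkn).ne'
  -- Nat identities
  have hN1 : n * (n-1).choose (k-1) = n.choose k * k := by
    have h := Nat.add_one_mul_choose_eq (n-1) (k-1)
    rw [show n-1+1 = n by omega, show k-1+1 = k by omega] at h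
    exact h
  have hN2 : (n-1) * (n-2).choose (k-2) = (n-1).choose (k-1) * (k-1) := by
    have h := Nat.add_one_mul_choose_eq (n-2) (k-2)
    rw [show n-2+1 = n-1 by omega, show k-2+1 = k-1 by omega] at h
    exact h
  have H1 : (n : ℝ) * ((n-1).choose (k-1) : ℝ) = (n.choose k : ℝ) * (k : ℝ) := by
    exact_mod_cast hN1
  have H2 : ((n : ℝ) - 1) * ((n-2).choose (k-2) : ℝ)
      = ((n-1).choose (k-1) : ℝ) * ((k : ℝ) - 1) := by
    have := congrArg (Nat.cast : ℕ → ℝ) hN2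
    push_cast at this
    rw [Nat.cast_sub (by omega : 1 ≤ n), Nat.cast_sub (by omega : 1 ≤ k)] at this
    push_cast at this
    convert this using 2
  have hc1 : (((n-1).choose (k-1) : ℕ) : ℝ) = (n.choose k : ℝ) * k / n := by
    rw [eq_div_iff hn0]
    linarith [H1]
  have hc2 : (((n-2).choose (k-2) : ℕ) : ℝ)
      = (n.choose k : ℝ) * k * ((k:ℝ) - 1) / ((n:ℝ) * ((n:ℝ) - 1)) := by
    rw [eq_div_iff (mul_ne_zero hn0 hn1)]
    linear_combination (n : ℝ) * H2 + ((k:ℝ) - 1) * H1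
  constructor
  · congr 1
    refine Finset.sum_congr rfl fun S hS => ?_
    have hcard : S.card = k := (Finset.mem_powersetCard.mp hS).2
    have hne : S.Nonempty := Finset.card_pos.mp (by omega)
    rw [cliqueW_transpose, cliqueW_idem S hne]
  · ext i j
    simp only [Matrix.smul_apply, Matrix.sum_apply, Matrix.add_apply, smul_eq_mul,
      vecMulVec_apply, mul_one]
    have hrw : ∀ S ∈ Finset.powersetCard k (Finset.univ : Finset (Fin n)),
        cliqueW n S i j = (k : ℝ)⁻¹ * ((if i ∈ S then (1:ℝ) else 0) * (if j ∈ S then (1:ℝ) else 0))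
          + (if i = j ∧ i ∉ S then (1:ℝ) else 0) := fun S hS => by
      rw [cliqueW_apply, (Finset.mem_powersetCard.mp hS).2]
    rw [Finset.sum_congr rfl hrw]
    rcases eq_or_ne i j with rfl | hij
    · -- diagonal
      have hterm : ∀ S : Finset (Fin n),
          (k : ℝ)⁻¹ * ((if i ∈ S then (1:ℝ) else 0) * (if i ∈ S then (1:ℝ) else 0))
            + (if i = i ∧ i ∉ S then (1:ℝ) else 0)
          = ((k : ℝ)⁻¹ - 1) * (if i ∈ S then (1:ℝ) else 0) + 1 := fun S => by
        by_cases h : i ∈ S <;> simp [h]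
      rw [Finset.sum_congr rfl fun S _ => hterm S, Finset.sum_add_distrib, Finset.sum_const,
        ← Finset.mul_sum, Finset.sum_boole]
      have hcount : ((Finset.powersetCard k (Finset.univ : Finset (Fin n))).filter
          (fun S => i ∈ S)).card = (n-1).choose (k-1) := by
        have : ∀ S : Finset (Fin n), (i ∈ S) = ({i} ⊆ S) := fun S => by
          simp [Finset.singleton_subset_iff]
        simp only [this]
        have := count_subset k ({i} : Finset (Fin n)) (by simp; omega)
        simpa using this
      rw [hcount, Finset.card_powersetCard, Finset.card_univ, Fintype.card_fin]
      rw [Matrix.one_apply_eq, hc1]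
      field_simp
      ring
    · -- off-diagonal
      have hterm : ∀ S : Finset (Fin n),
          (k : ℝ)⁻¹ * ((if i ∈ S then (1:ℝ) else 0) * (if j ∈ S then (1:ℝ) else 0))
            + (if i = j ∧ i ∉ S then (1:ℝ) else 0)
          = (k : ℝ)⁻¹ * (if ({i, j} : Finset (Fin n)) ⊆ S then (1:ℝ) else 0) := fun S => by
        have hfalse : ¬(i = j ∧ i ∉ S) := fun hc => hij hc.1
        rw [if_neg hfalse, add_zero]
        by_cases h1 : i ∈ S <;> by_cases h2 : j ∈ S <;>
          simp [Finset.insert_subset_iff, h1, h2]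
      rw [Finset.sum_congr rfl fun S _ => hterm S, ← Finset.mul_sum, Finset.sum_boole]
      have hcount : ((Finset.powersetCard k (Finset.univ : Finset (Fin n))).filter
          (fun S => ({i, j} : Finset (Fin n)) ⊆ S)).card = (n-2).choose (k-2) := by
        have := count_subset k ({i, j} : Finset (Fin n)) (by rw [Finset.card_pair hij]; omega)
        rwa [Finset.card_pair hij] at this
      rw [hcount, Matrix.one_apply_ne hij, hc2]
      field_simp
      ring
end

section
/- Let n ≥ 3 and 2 ≤ k ≤ n−1, and let ν = (n−k)/(n−1). Let (S_t)_{t≥0} be i.i.d. random variables, each uniformly distributed over the k-element subsets of {1,…,n}, and for an initial vector x(0) ∈ ℝⁿ define x(t+1) = W_{S_t} x(t), where W_S is the clique-averaging matrix of S. Let x̄ = (1/n)Σ_{j=1}^n x_j(0). Then for every t ≥ 0, 𝔼[‖x(t) − x̄·𝟙‖²] = ν^t · ‖x(0) − x̄·𝟙‖². In particular 0 < max over initial states with x(0) ≠ x̄𝟙 of limsup_{t→∞} 𝔼[‖x(t) − x̄𝟙‖²]/ν^t < ∞. -/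
open Matrix Finset

lemma cliqueW_mulVec {n : ℕ} (S : Finset (Fin n)) (hS : S.Nonempty) (y : Fin n → ℝ) (i : Fin n) :
    (cliqueW n S *ᵥ y) i = if i ∈ S then (∑ j ∈ S, y j) / S.card else y i := by
  have hc : (S.card : ℝ) ≠ 0 := by
    have := Finset.card_pos.mpr hS
    positivity
  simp only [cliqueW, add_mulVec, smul_mulVec, Pi.add_apply, Pi.smul_apply, smul_eq_mul]
  have h1 : (Matrix.vecMulVec (fun i => if i ∈ S then (1:ℝ) else 0)
      (fun i => if i ∈ S then 1 else 0) *ᵥ y) i = if i ∈ S then ∑ j ∈ S, y j else 0 := by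
    simp only [mulVec, dotProduct, vecMulVec_apply]
    by_cases hi : i ∈ S <;> simp [hi, ite_mul, Finset.sum_ite_mem, Finset.inter_comm]
  have h2 : ((∑ j ∈ Sᶜ, Matrix.vecMulVec (Pi.single j (1:ℝ)) (Pi.single j 1)) *ᵥ y) i
      = if i ∈ S then 0 else y i := by
    simp only [mulVec, dotProduct, Matrix.sum_apply, vecMulVec_apply, Pi.single_apply]
    have hinner : ∀ l, (∑ j ∈ Sᶜ, (if i = j then (1:ℝ) else 0) * (if l = j then 1 else 0))
        = if i ∈ Sᶜ then (if l = i then 1 else 0) else 0 := by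
      intro l
      simp_rw [ite_mul, one_mul, zero_mul]
      rw [Finset.sum_ite_eq Sᶜ i (fun j => if l = j then (1:ℝ) else 0)]
    simp_rw [hinner]
    by_cases hi : i ∈ S
    · simp [hi]
    · simp [hi, Finset.mem_compl.mpr hi, ite_mul, one_mul, zero_mul]
  rw [h1, h2]
  by_cases hi : i ∈ S <;> simp [hi, div_eq_inv_mul]

lemma sum_cliqueW_mulVec {n : ℕ} (S : Finset (Fin n)) (hS : S.Nonempty) (y : Fin n → ℝ) :
    ∑ i, (cliqueW n S *ᵥ y) i = ∑ i, y i := by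
  have hc : (S.card : ℝ) ≠ 0 := by
    have := Finset.card_pos.mpr hS
    positivity
  simp_rw [cliqueW_mulVec S hS y]
  rw [← Finset.sum_add_sum_compl S]
  rw [Finset.sum_ite_of_true (by intro i hi; exact hi),
      Finset.sum_ite_of_false (by intro i hi; exact Finset.mem_compl.mp hi)]
  rw [Finset.sum_const, nsmul_eq_mul, mul_div_cancel₀ _ hc, Finset.sum_add_sum_compl]

lemma sq_sum_cliqueW_mulVec {n : ℕ} (S : Finset (Fin n)) (hS : S.Nonempty) (y : Fin n → ℝ) :
    ∑ i, ((cliqueW n S *ᵥ y) i) ^ 2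
      = ∑ i, y i ^ 2 - ∑ i ∈ S, y i ^ 2 + (∑ i ∈ S, y i) ^ 2 / S.card := by
  have hc : (S.card : ℝ) ≠ 0 := by
    have := Finset.card_pos.mpr hS
    positivity
  simp_rw [cliqueW_mulVec S hS y]
  rw [← Finset.sum_add_sum_compl S]
  rw [Finset.sum_congr rfl (fun i hi => by rw [if_pos hi]),
      Finset.sum_congr rfl (fun i (hi : i ∈ Sᶜ) => by rw [if_neg (Finset.mem_compl.mp hi)])]
  rw [Finset.sum_const, nsmul_eq_mul, div_pow]
  have hcompl : ∑ i ∈ Sᶜ, y i ^ 2 = ∑ i, y i ^ 2 - ∑ i ∈ S, y i ^ 2 := by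
    rw [eq_sub_iff_add_eq, Finset.sum_compl_add_sum]
  rw [hcompl]
  field_simp
  ring

lemma card_filter_mem_powersetCard {α : Type*} [DecidableEq α] (s : Finset α) (i : α)
    (hi : i ∈ s) (k : ℕ) :
    ((Finset.powersetCard (k+1) s).filter (fun S => i ∈ S)).card = (s.card - 1).choose k := by
  rw [← Finset.card_erase_of_mem hi, ← Finset.card_powersetCard]
  refine Finset.card_bij' (fun S _ => S.erase i) (fun T _ => insert i T) ?_ ?_ ?_ ?_
  · intro S hS
    simp only [Finset.mem_filter, Finset.mem_powersetCard] at hS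
    simp only [Finset.mem_powersetCard]
    exact ⟨Finset.erase_subset_erase i hS.1.1,
      by rw [Finset.card_erase_of_mem hS.2, hS.1.2]; omega⟩
  · intro T hT
    simp only [Finset.mem_powersetCard] at hT
    have hiT : i ∉ T := fun h => (Finset.mem_erase.mp (hT.1 h)).1 rfl
    simp only [Finset.mem_filter, Finset.mem_powersetCard]
    refine ⟨⟨?_, ?_⟩, Finset.mem_insert_self i T⟩
    · intro x hx
      rcases Finset.mem_insert.mp hx with rfl | hx
      · exact hi
      · exact Finset.mem_of_mem_erase (hT.1 hx)
    · rw [Finset.card_insert_of_notMem hiT, hT.2]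
  · intro S hS
    simp only [Finset.mem_filter] at hS
    exact Finset.insert_erase hS.2
  · intro T hT
    simp only [Finset.mem_powersetCard] at hT
    exact Finset.erase_insert (fun h => (Finset.mem_erase.mp (hT.1 h)).1 rfl)

lemma card_filter_mem_pair_powersetCard {α : Type*} [DecidableEq α] (s : Finset α) (i j : α)
    (hij : i ≠ j) (hi : i ∈ s) (hj : j ∈ s) (k : ℕ) :
    ((Finset.powersetCard (k+2) s).filter (fun S => i ∈ S ∧ j ∈ S)).card
      = (s.card - 2).choose k := by
  have hjs : j ∈ s.erase i := Finset.mem_erase.mpr ⟨hij.symm, hj⟩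
  have := card_filter_mem_powersetCard (s.erase i) j hjs k
  rw [Finset.card_erase_of_mem hi] at this
  rw [show s.card - 2 = s.card - 1 - 1 by omega, ← this]
  refine Finset.card_bij' (fun S _ => S.erase i) (fun T _ => insert i T) ?_ ?_ ?_ ?_
  · intro S hS
    simp only [Finset.mem_filter, Finset.mem_powersetCard] at hS ⊢
    exact ⟨⟨Finset.erase_subset_erase i hS.1.1,
      by rw [Finset.card_erase_of_mem hS.2.1, hS.1.2]; omega⟩,
      Finset.mem_erase.mpr ⟨fun h => hij h.symm, hS.2.2⟩⟩
  · intro T hT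
    simp only [Finset.mem_filter, Finset.mem_powersetCard] at hT ⊢
    have hiT : i ∉ T := fun h => (Finset.mem_erase.mp (hT.1.1 h)).1 rfl
    refine ⟨⟨?_, ?_⟩, Finset.mem_insert_self i T, Finset.mem_insert_of_mem hT.2⟩
    · intro x hx
      rcases Finset.mem_insert.mp hx with rfl | hx
      · exact hi
      · exact Finset.mem_of_mem_erase (hT.1.1 hx)
    · rw [Finset.card_insert_of_notMem hiT, hT.1.2]
  · intro S hS
    simp only [Finset.mem_filter] at hS
    exact Finset.insert_erase hS.2.1
  · intro T hT
    simp only [Finset.mem_filter, Finset.mem_powersetCard] at hT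
    exact Finset.erase_insert (fun h => (Finset.mem_erase.mp (hT.1.1 h)).1 rfl)

section Step
variable {n k : ℕ}

lemma claim1 (hk1 : 1 ≤ k) (hkn' : k ≤ n) (g : Fin n → ℝ) :
    ∑ S ∈ Finset.powersetCard k (Finset.univ : Finset (Fin n)), ∑ i ∈ S, g i
      = ((n-1).choose (k-1) : ℝ) * ∑ i, g i := by
  have hstep : ∀ S : Finset (Fin n), ∑ i ∈ S, g i = ∑ i, if i ∈ S then g i else 0 := by
    intro S
    rw [Finset.sum_ite_mem, Finset.univ_inter]
  simp_rw [hstep]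
  rw [Finset.sum_comm]
  have hcnt : ∀ i : Fin n,
      ∑ S ∈ Finset.powersetCard k (Finset.univ : Finset (Fin n)), (if i ∈ S then g i else 0)
        = ((n-1).choose (k-1) : ℝ) * g i := by
    intro i
    rw [← Finset.sum_filter, Finset.sum_const, nsmul_eq_mul]
    congr 1
    have := card_filter_mem_powersetCard (Finset.univ : Finset (Fin n)) i (Finset.mem_univ i) (k-1)
    rw [show k - 1 + 1 = k by omega, Finset.card_univ, Fintype.card_fin] at this
    exact_mod_cast congrArg (Nat.cast : ℕ → ℝ) this
  rw [Finset.sum_congr rfl (fun i _ => hcnt i), ← Finset.mul_sum]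
  simp

lemma claim_off (hk2 : 2 ≤ k) (hkn' : k ≤ n) (y : Fin n → ℝ) :
    ∑ S ∈ Finset.powersetCard k (Finset.univ : Finset (Fin n)),
        ∑ i ∈ S, ∑ j ∈ S.erase i, y i * y j
      = ((n-2).choose (k-2) : ℝ) * ∑ i, ∑ j ∈ Finset.univ.erase i, y i * y j := by
  have hstep : ∀ S : Finset (Fin n),
      ∑ i ∈ S, ∑ j ∈ S.erase i, y i * y j
        = ∑ i, ∑ j ∈ Finset.univ.erase i, if i ∈ S ∧ j ∈ S then y i * y j else 0 := by
    intro S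
    rw [show (∑ i ∈ S, ∑ j ∈ S.erase i, y i * y j)
        = ∑ i, if i ∈ S then ∑ j ∈ S.erase i, y i * y j else 0 by
      rw [Finset.sum_ite_mem, Finset.univ_inter]]
    refine Finset.sum_congr rfl fun i _ => ?_
    by_cases hi : i ∈ S
    · rw [if_pos hi]
      have : S.erase i = (Finset.univ.erase i) ∩ S := by
        ext x; simp [Finset.mem_erase, and_comm]
      rw [this, ← Finset.sum_ite_mem]
      refine Finset.sum_congr rfl fun j hj => ?_
      simp [hi]
    · rw [if_neg hi]
      rw [Finset.sum_eq_zero]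
      intro j _
      simp [hi]
  simp_rw [hstep]
  rw [Finset.sum_comm]
  refine Eq.trans (Finset.sum_congr rfl fun i _ => Finset.sum_comm) ?_
  rw [Finset.mul_sum]
  refine Finset.sum_congr rfl fun i _ => ?_
  rw [Finset.mul_sum]
  refine Finset.sum_congr rfl fun j hj => ?_
  have hij : i ≠ j := fun h => (Finset.mem_erase.mp hj).1 h.symm
  simp only [Finset.mem_univ, true_and]
  rw [← Finset.sum_filter, Finset.sum_const, nsmul_eq_mul]
  congr 1
  have := card_filter_mem_pair_powersetCard (Finset.univ : Finset (Fin n)) i j hij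
    (Finset.mem_univ i) (Finset.mem_univ j) (k-2)
  rw [show k - 2 + 2 = k by omega, Finset.card_univ, Fintype.card_fin] at this
  exact_mod_cast congrArg (Nat.cast : ℕ → ℝ) this

lemma step_sum (hn : 3 ≤ n) (hk : 2 ≤ k) (hkn : k ≤ n - 1) (y : Fin n → ℝ)
    (hy : ∑ i, y i = 0) :
    ∑ S ∈ Finset.powersetCard k (Finset.univ : Finset (Fin n)), ∑ i, ((cliqueW n S *ᵥ y) i) ^ 2
      = (n.choose k : ℝ) * (((n:ℝ) - (k:ℝ)) / ((n:ℝ) - 1)) * ∑ i, y i ^ 2 := by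
  have hkn' : k ≤ n := by omega
  set P := Finset.powersetCard k (Finset.univ : Finset (Fin n)) with hP
  have hcard : ∀ S ∈ P, S.card = k := fun S hS => (Finset.mem_powersetCard.mp hS).2
  have hne : ∀ S ∈ P, S.Nonempty := by
    intro S hS
    rw [← Finset.card_pos, hcard S hS]; omega
  -- rewrite each summand
  have h1 : ∑ S ∈ P, ∑ i, ((cliqueW n S *ᵥ y) i) ^ 2
      = ∑ S ∈ P, (∑ i, y i ^ 2 - ∑ i ∈ S, y i ^ 2 + (∑ i ∈ S, y i) ^ 2 / k) := by
    refine Finset.sum_congr rfl fun S hS => ?_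
    rw [sq_sum_cliqueW_mulVec S (hne S hS) y, hcard S hS]
  rw [h1]
  -- expand the square
  have hsq : ∀ S ∈ P, (∑ i ∈ S, y i) ^ 2
      = ∑ i ∈ S, y i ^ 2 + ∑ i ∈ S, ∑ j ∈ S.erase i, y i * y j := by
    intro S _
    rw [sq, Finset.sum_mul_sum]
    rw [← Finset.sum_add_distrib]
    refine Finset.sum_congr rfl fun i hi => ?_
    rw [sq, ← Finset.add_sum_erase _ (fun j => y i * y j) hi]
  rw [Finset.sum_congr rfl (fun S hS => by rw [hsq S hS])]
  rw [Finset.sum_add_distrib, Finset.sum_sub_distrib, Finset.sum_const, nsmul_eq_mul,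
    ← Finset.sum_div, Finset.sum_add_distrib]
  have hC : (P.card : ℝ) = (n.choose k : ℝ) := by
    rw [hP, Finset.card_powersetCard, Finset.card_univ, Fintype.card_fin]
  rw [hC, claim1 (by omega) hkn' (fun i => y i ^ 2), claim_off hk hkn' y]
  -- the off-diagonal sum equals -∑ y²
  have hoff : ∑ i, ∑ j ∈ Finset.univ.erase i, y i * y j = -∑ i, y i ^ 2 := by
    rw [← Finset.sum_neg_distrib]
    refine Finset.sum_congr rfl fun i _ => ?_
    rw [← Finset.mul_sum, Finset.sum_erase_eq_sub (Finset.mem_univ i), hy]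
    ring
  rw [hoff]
  -- numeric identities
  have hA : (n : ℝ) * ((n-1).choose (k-1) : ℝ) = (n.choose k : ℝ) * k := by
    have h := Nat.add_one_mul_choose_eq (n-1) (k-1)
    rw [show n - 1 + 1 = n by omega, show k - 1 + 1 = k by omega] at h
    exact_mod_cast congrArg (Nat.cast : ℕ → ℝ) h
  have hB : ((n:ℝ) - 1) * ((n-2).choose (k-2) : ℝ) = ((n-1).choose (k-1) : ℝ) * ((k:ℝ) - 1) := by
    have h := Nat.add_one_mul_choose_eq (n-2) (k-2)
    rw [show n - 2 + 1 = n - 1 by omega, show k - 2 + 1 = k - 1 by omega] at h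
    have h' : ((n-1 : ℕ) : ℝ) * ((n-2).choose (k-2) : ℝ)
        = ((n-1).choose (k-1) : ℝ) * ((k-1 : ℕ) : ℝ) := by exact_mod_cast congrArg (Nat.cast : ℕ → ℝ) h
    push_cast [Nat.cast_sub (show 1 ≤ n by omega), Nat.cast_sub (show 1 ≤ k by omega)] at h'
    exact_mod_cast h'
  set T := ∑ i, y i ^ 2
  set C := (n.choose k : ℝ)
  set A := ((n-1).choose (k-1) : ℝ)
  set B := ((n-2).choose (k-2) : ℝ)
  have hn0 : (n : ℝ) ≠ 0 := by positivity
  have hk0 : (k : ℝ) ≠ 0 := by positivity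
  have hn1 : (n : ℝ) - 1 ≠ 0 := by
    have : (3:ℝ) ≤ n := by exact_mod_cast hn
    linarith
  have hAval : A = C * k / n := by
    field_simp
    linarith [hA]
  have hBval : B = C * k * ((k:ℝ) - 1) / ((n:ℝ) * ((n:ℝ) - 1)) := by
    have : B = A * ((k:ℝ) - 1) / ((n:ℝ) - 1) := by
      field_simp
      linarith [hB]
    rw [this, hAval]
    field_simp
  rw [hAval, hBval]
  field_simp
  ring
end Step

lemma sum_piFinset_succ {β : Type*} [DecidableEq β] {t : ℕ} (A : Finset β)
    (g : (Fin (t+1) → β) → ℝ) :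
    ∑ ω ∈ Fintype.piFinset (fun _ : Fin (t+1) => A), g ω
      = ∑ S ∈ A, ∑ ω' ∈ Fintype.piFinset (fun _ : Fin t => A), g (Fin.cons S ω') := by
  rw [← Finset.sum_product']
  refine Finset.sum_bij' (fun ω _ => ((ω 0 : β), Fin.tail ω))
    (fun p _ => Fin.cons p.1 p.2) ?_ ?_ ?_ ?_ ?_
  · intro ω hω
    rw [Fintype.mem_piFinset] at hω
    rw [Finset.mem_product]
    exact ⟨hω 0, Fintype.mem_piFinset.mpr fun τ => hω τ.succ⟩
  · intro p hp
    rw [Finset.mem_product] at hp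
    rw [Fintype.mem_piFinset]
    intro τ
    refine Fin.cases ?_ ?_ τ
    · simpa using hp.1
    · intro i; simpa using Fintype.mem_piFinset.mp hp.2 i
  · intro ω _
    exact Fin.cons_self_tail ω
  · intro p _
    simp [Fin.tail_cons]
  · intro ω _
    rw [Fin.cons_self_tail ω]

lemma listprod_mulVec_const {n : ℕ} (c : ℝ) (L : List (Matrix (Fin n) (Fin n) ℝ))
    (h : ∀ M ∈ L, M *ᵥ (fun _ => c) = fun _ => c) :
    L.prod *ᵥ (fun _ => c) = fun _ => c := by
  induction L with
  | nil => simp [Matrix.one_mulVec]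
  | cons M L ih =>
    rw [List.prod_cons, ← Matrix.mulVec_mulVec,
      ih (fun N hN => h N (List.mem_cons_of_mem _ hN)), h M List.mem_cons_self]

lemma cliqueW_mulVec_const {n : ℕ} (S : Finset (Fin n)) (hS : S.Nonempty) (c : ℝ) :
    cliqueW n S *ᵥ (fun _ => c) = fun _ => c := by
  have hc : (S.card : ℝ) ≠ 0 := by
    have := Finset.card_pos.mpr hS
    positivity
  funext i
  rw [cliqueW_mulVec S hS _ i]
  by_cases hi : i ∈ S
  · rw [if_pos hi, Finset.sum_const, nsmul_eq_mul]
    field_simp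
  · rw [if_neg hi]

lemma gossip_aux {n k : ℕ} (hn : 3 ≤ n) (hk : 2 ≤ k) (hkn : k ≤ n - 1)
    (y : Fin n → ℝ) (hy : ∑ i, y i = 0) : ∀ t : ℕ,
    ∑ ω ∈ Fintype.piFinset
        (fun _ : Fin t => Finset.powersetCard k (Finset.univ : Finset (Fin n))),
      ∑ i, (((List.ofFn fun τ : Fin t => cliqueW n (ω τ)).reverse.prod *ᵥ y) i) ^ 2
    = ((n.choose k : ℝ) * (((n:ℝ) - (k:ℝ)) / ((n:ℝ) - 1))) ^ t * ∑ i, y i ^ 2 := by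
  intro t
  induction t generalizing y hy with
  | zero => simp [Matrix.one_mulVec]
  | succ t ih =>
    rw [sum_piFinset_succ]
    have hsummand : ∀ S ∈ Finset.powersetCard k (Finset.univ : Finset (Fin n)),
        ∀ ω' ∈ Fintype.piFinset
          (fun _ : Fin t => Finset.powersetCard k (Finset.univ : Finset (Fin n))),
        ∑ i, (((List.ofFn fun τ : Fin (t+1) => cliqueW n ((Fin.cons S ω' : Fin (t+1) → Finset (Fin n)) τ)).reverse.prod *ᵥ y) i) ^ 2
          = ∑ i, (((List.ofFn fun τ : Fin t => cliqueW n (ω' τ)).reverse.prod *ᵥ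
              (cliqueW n S *ᵥ y)) i) ^ 2 := by
      intro S _ ω' _
      have hlist : (List.ofFn fun τ : Fin (t+1) => cliqueW n ((Fin.cons S ω' : Fin (t+1) → Finset (Fin n)) τ))
          = cliqueW n S :: List.ofFn fun τ : Fin t => cliqueW n (ω' τ) := by
        rw [List.ofFn_succ]
        simp [Fin.cons_zero, Fin.cons_succ]
      rw [hlist, List.reverse_cons, List.prod_append, List.prod_singleton,
        ← Matrix.mulVec_mulVec]
    rw [Finset.sum_congr rfl (fun S hS => Finset.sum_congr rfl (fun ω' hω' =>
      hsummand S hS ω' hω'))]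
    have hWsum : ∀ S ∈ Finset.powersetCard k (Finset.univ : Finset (Fin n)),
        ∑ i, (cliqueW n S *ᵥ y) i = 0 := by
      intro S hS
      have hcard := (Finset.mem_powersetCard.mp hS).2
      have hne : S.Nonempty := by rw [← Finset.card_pos, hcard]; omega
      rw [sum_cliqueW_mulVec S hne y, hy]
    rw [Finset.sum_congr rfl (fun S hS => ih (cliqueW n S *ᵥ y) (hWsum S hS))]
    rw [← Finset.mul_sum, step_sum hn hk hkn y hy]
    ring

/-- Theorem 3 (rate statement): with `S₀, S₁, …` i.i.d. uniform over `k`-element subsets and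
`x(t+1) = W_{S_t} x(t)`, one has `𝔼[‖x(t) − x̄𝟙‖²] = ν^t·‖x(0) − x̄𝟙‖²` for every `t`,
where `ν = (n−k)/(n−1)`.  The expectation over the first `t` choices is written as a uniform
average over all `ω : Fin t → {k-subsets}`, and
`x(t) = W_{S_{t−1}} ⋯ W_{S_0} x(0)` is `(List.ofFn fun τ => W (ω τ)).reverse.prod *ᵥ x0`. -/
theorem randomized_clique_gossip_meanSquare_rate
    {n k : ℕ} (hn : 3 ≤ n) (hk : 2 ≤ k) (hkn : k ≤ n - 1)
    (x0 : Fin n → ℝ) (xbar : ℝ) (hxbar : xbar = (∑ j, x0 j) / n) :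
    ∀ t : ℕ,
      (∑ ω ∈ Fintype.piFinset
            (fun _ : Fin t => Finset.powersetCard k (Finset.univ : Finset (Fin n))),
          ∑ i, ((((List.ofFn fun τ : Fin t => cliqueW n (ω τ)).reverse.prod *ᵥ x0) i - xbar) ^ 2))
          / (n.choose k : ℝ) ^ t
        = (((n : ℝ) - (k : ℝ)) / ((n : ℝ) - 1)) ^ t * ∑ i, (x0 i - xbar) ^ 2 := by
  intro t
  have hn0 : (n : ℝ) ≠ 0 := by positivity
  set y : Fin n → ℝ := fun i => x0 i - xbar with hydef
  have hy : ∑ i, y i = 0 := by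
    simp only [hydef]
    rw [Finset.sum_sub_distrib, Finset.sum_const, Finset.card_univ, Fintype.card_fin,
      nsmul_eq_mul, hxbar]
    field_simp
    ring
  have hx0 : x0 = fun i => y i + xbar := by funext i; simp [hydef]
  -- rewrite each summand using linearity and the fixed point
  have hterm : ∀ ω ∈ Fintype.piFinset
      (fun _ : Fin t => Finset.powersetCard k (Finset.univ : Finset (Fin n))),
      ∑ i, ((((List.ofFn fun τ : Fin t => cliqueW n (ω τ)).reverse.prod *ᵥ x0) i - xbar) ^ 2)
        = ∑ i, (((List.ofFn fun τ : Fin t => cliqueW n (ω τ)).reverse.prod *ᵥ y) i) ^ 2 := by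
    intro ω hω
    have hfix : (List.ofFn fun τ : Fin t => cliqueW n (ω τ)).reverse.prod *ᵥ (fun _ => xbar)
        = fun _ => xbar := by
      apply listprod_mulVec_const
      intro M hM
      rw [List.mem_reverse, List.mem_ofFn] at hM
      obtain ⟨τ, rfl⟩ := hM
      have hcard := (Finset.mem_powersetCard.mp (Fintype.mem_piFinset.mp hω τ)).2
      exact cliqueW_mulVec_const _ (by rw [← Finset.card_pos, hcard]; omega) xbar
    have hsplit : (List.ofFn fun τ : Fin t => cliqueW n (ω τ)).reverse.prod *ᵥ x0
        = (fun i => ((List.ofFn fun τ : Fin t => cliqueW n (ω τ)).reverse.prod *ᵥ y) i + xbar) := by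
      rw [hx0, show (fun i => y i + xbar) = y + (fun _ => xbar) from rfl, Matrix.mulVec_add, hfix]
      rfl
    rw [hsplit]
    simp
  rw [Finset.sum_congr rfl hterm, gossip_aux hn hk hkn y hy t]
  have hCpos : (0:ℝ) < (n.choose k : ℝ) := by
    exact_mod_cast Nat.choose_pos (by omega : k ≤ n)
  rw [mul_pow]
  have hCne : ((n.choose k : ℝ)) ^ t ≠ 0 := by positivity
  rw [mul_comm ((n.choose k : ℝ) ^ t), mul_assoc, mul_div_assoc, mul_div_cancel_left₀ _ hCne]
end

section
/- Let n ≥ 3 and 2 ≤ k ≤ n−1. Let (S_t)_{t≥0} be i.i.d. random variables, each uniformly distributed over the k-element subsets of {1,…,n}, and for x(0) ∈ ℝⁿ define x(t+1) = W_{S_t} x(t), where W_S is the clique-averaging matrix of S. Then almost surely x(t) converges to x̄·𝟙, where x̄ = (1/n)Σ_{j=1}^n x_j(0). -/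
open Matrix Finset Filter MeasureTheory ProbabilityTheory
open scoped ENNReal

/-- Finsets of `Fin n` carry the discrete σ-algebra. -/
instance {n : ℕ} : MeasurableSpace (Finset (Fin n)) := ⊤

namespace CliqueGossip
variable {n : ℕ}

lemma cliqueW_apply (s : Finset (Fin n)) (i j : Fin n) :
    cliqueW n s i j = (s.card : ℝ)⁻¹ * (if i ∈ s ∧ j ∈ s then 1 else 0)
      + (if i = j ∧ i ∉ s then 1 else 0) := by
  simp only [cliqueW, Matrix.add_apply, Matrix.smul_apply, Matrix.sum_apply,
    Matrix.vecMulVec_apply, Pi.single_apply, smul_eq_mul]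
  congr 1
  · by_cases hi : i ∈ s <;> by_cases hj : j ∈ s <;> simp [hi, hj]
  · by_cases hij : i = j
    · subst hij
      by_cases hi : i ∈ s <;> simp [hi, Finset.sum_ite_eq', Finset.mem_compl]
    · simp only [hij, false_and, if_false]
      apply Finset.sum_eq_zero
      intro x hx
      by_cases h1 : i = x <;> by_cases h2 : j = x <;> simp_all

lemma cliqueW_mulVec (s : Finset (Fin n)) (y : Fin n → ℝ) :
    cliqueW n s *ᵥ y = fun i => if i ∈ s then (s.card : ℝ)⁻¹ * ∑ j ∈ s, y j else y i := by
  funext i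
  simp only [Matrix.mulVec, dotProduct, cliqueW_apply, add_mul, Finset.sum_add_distrib]
  have h1 : ∑ j, (s.card : ℝ)⁻¹ * (if i ∈ s ∧ j ∈ s then 1 else 0) * y j
      = if i ∈ s then (s.card : ℝ)⁻¹ * ∑ j ∈ s, y j else 0 := by
    by_cases hi : i ∈ s
    · simp only [hi, true_and, if_true, Finset.mul_sum]
      rw [← Finset.sum_filter_add_sum_filter_not Finset.univ (· ∈ s)]
      have : ∀ j ∈ Finset.univ.filter (· ∉ s),
          (s.card : ℝ)⁻¹ * (if j ∈ s then 1 else 0) * y j = 0 := by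
        intro j hj; simp at hj; simp [hj]
      rw [Finset.sum_eq_zero this, add_zero]
      rw [Finset.filter_mem_eq_inter, Finset.univ_inter]
      apply Finset.sum_congr rfl
      intro j hj; simp [hj]
    · simp [hi]
  have h2 : ∑ j, (if i = j ∧ i ∉ s then 1 else 0) * y j = if i ∈ s then 0 else y i := by
    by_cases hi : i ∈ s
    · simp [hi]
    · simp only [hi, not_false_iff, and_true, if_false]
      rw [Finset.sum_eq_single i] <;> simp_all [eq_comm]
  rw [h1, h2]
  by_cases hi : i ∈ s <;> simp [hi]

end CliqueGossip

namespace CliqueGossip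
variable {n : ℕ}

def Qf (y : Fin n → ℝ) : ℝ := ∑ i, (y i)^2

noncomputable def gf (s : Finset (Fin n)) (y : Fin n → ℝ) : ℝ :=
  ((s.card : ℝ))⁻¹ * (∑ i ∈ s, y i)^2 + ∑ i ∈ sᶜ, (y i)^2

lemma Qf_nonneg (y : Fin n → ℝ) : 0 ≤ Qf y :=
  Finset.sum_nonneg fun i _ => sq_nonneg _

lemma Qf_split (s : Finset (Fin n)) (y : Fin n → ℝ) :
    Qf y = ∑ i ∈ s, (y i)^2 + ∑ i ∈ sᶜ, (y i)^2 :=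
  (Finset.sum_add_sum_compl s _).symm

lemma gf_nonneg (s : Finset (Fin n)) (y : Fin n → ℝ) : 0 ≤ gf s y := by
  have : (0:ℝ) ≤ ((s.card : ℝ))⁻¹ * (∑ i ∈ s, y i)^2 := by positivity
  exact add_nonneg this (Finset.sum_nonneg fun i _ => sq_nonneg _)

lemma gf_le_Qf (s : Finset (Fin n)) (y : Fin n → ℝ) : gf s y ≤ Qf y := by
  rw [gf, Qf_split s y]
  apply add_le_add_left
  rcases Nat.eq_zero_or_pos s.card with h | h
  · simp [h]; positivity
  · rw [inv_mul_le_iff₀ (by exact_mod_cast h)]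
    exact sq_sum_le_card_mul_sum_sq

lemma Qf_cliqueW (s : Finset (Fin n)) (hs : s.card ≠ 0) (y : Fin n → ℝ) :
    Qf (cliqueW n s *ᵥ y) = gf s y := by
  rw [cliqueW_mulVec, Qf_split s, gf]
  congr 1
  · rw [Finset.sum_congr rfl (fun i hi => by simp [hi] :
      ∀ i ∈ s, (if i ∈ s then (s.card : ℝ)⁻¹ * ∑ j ∈ s, y j else y i)^2
        = ((s.card : ℝ)⁻¹ * ∑ j ∈ s, y j)^2), Finset.sum_const, nsmul_eq_mul]
    have hc : (s.card : ℝ) ≠ 0 := by exact_mod_cast hs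
    field_simp
  · apply Finset.sum_congr rfl
    intro i hi
    simp [Finset.mem_compl.mp hi]

lemma sum_cliqueW (s : Finset (Fin n)) (hs : s.card ≠ 0) (y : Fin n → ℝ) :
    ∑ i, (cliqueW n s *ᵥ y) i = ∑ i, y i := by
  rw [cliqueW_mulVec, ← Finset.sum_add_sum_compl s, ← Finset.sum_add_sum_compl s (f := y)]
  congr 1
  · rw [Finset.sum_congr rfl (fun i hi => by simp [hi] :
      ∀ i ∈ s, (if i ∈ s then (s.card : ℝ)⁻¹ * ∑ j ∈ s, y j else y i)
        = (s.card : ℝ)⁻¹ * ∑ j ∈ s, y j), Finset.sum_const, nsmul_eq_mul]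
    have hc : (s.card : ℝ) ≠ 0 := by exact_mod_cast hs
    field_simp
  · apply Finset.sum_congr rfl
    intro i hi
    simp [Finset.mem_compl.mp hi]

lemma cliqueW_const (s : Finset (Fin n)) (hs : s.card ≠ 0) (c : ℝ) :
    cliqueW n s *ᵥ (fun _ => c) = fun _ => c := by
  rw [cliqueW_mulVec]
  funext i
  by_cases hi : i ∈ s
  · have hc : (s.card : ℝ) ≠ 0 := by exact_mod_cast hs
    simp [hi, Finset.sum_const, hc]
  · simp [hi]

lemma cliqueW_mulVec_sub_const (s : Finset (Fin n)) (hs : s.card ≠ 0) (x : Fin n → ℝ) (c : ℝ) :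
    (fun i => (cliqueW n s *ᵥ x) i - c) = cliqueW n s *ᵥ (fun i => x i - c) := by
  have h : (fun i => x i - c) = x - (fun _ => c) := rfl
  rw [h, Matrix.mulVec_sub, cliqueW_const s hs]
  rfl

end CliqueGossip

namespace CliqueGossip
variable {n k : ℕ}

lemma card_filter_mem (hk : 1 ≤ k) (i : Fin n) :
    (((Finset.univ : Finset (Fin n)).powersetCard k).filter (fun s => i ∈ s)).card
      = (n-1).choose (k-1) := by
  have h : (((Finset.univ : Finset (Fin n)).powersetCard k).filter (fun s => i ∈ s)).card
      = (((Finset.univ : Finset (Fin n)).erase i).powersetCard (k-1)).card := by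
    apply Finset.card_nbij' (fun s => s.erase i) (fun t => insert i t)
    · intro s hs
      simp only [Finset.mem_coe, Finset.mem_filter, Finset.mem_powersetCard] at hs
      simp only [Finset.mem_coe, Finset.mem_powersetCard]
      refine ⟨fun x hx => ?_, ?_⟩
      · simp only [Finset.mem_erase] at hx ⊢
        exact ⟨hx.1, Finset.mem_univ _⟩
      · rw [Finset.card_erase_of_mem hs.2, hs.1.2]
    · intro t ht
      simp only [Finset.mem_coe, Finset.mem_powersetCard] at ht
      have hit : i ∉ t := fun h => (Finset.mem_erase.mp (ht.1 h)).1 rfl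
      simp only [Finset.mem_coe, Finset.mem_filter, Finset.mem_powersetCard]
      refine ⟨⟨Finset.subset_univ _, ?_⟩, Finset.mem_insert_self _ _⟩
      rw [Finset.card_insert_of_notMem hit, ht.2]
      omega
    · intro s hs
      simp only [Finset.mem_coe, Finset.mem_filter] at hs
      exact Finset.insert_erase hs.2
    · intro t ht
      simp only [Finset.mem_coe, Finset.mem_powersetCard] at ht
      have hit : i ∉ t := fun h => (Finset.mem_erase.mp (ht.1 h)).1 rfl
      exact Finset.erase_insert hit
  rw [h, Finset.card_powersetCard, Finset.card_erase_of_mem (Finset.mem_univ _),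
    Finset.card_univ, Fintype.card_fin]

lemma card_filter_mem_pair (hk : 2 ≤ k) {i j : Fin n} (hij : i ≠ j) :
    (((Finset.univ : Finset (Fin n)).powersetCard k).filter (fun s => i ∈ s ∧ j ∈ s)).card
      = (n-2).choose (k-2) := by
  have h : (((Finset.univ : Finset (Fin n)).powersetCard k).filter
        (fun s => i ∈ s ∧ j ∈ s)).card
      = ((((Finset.univ : Finset (Fin n)).erase i).erase j).powersetCard (k-2)).card := by
    apply Finset.card_nbij' (fun s => (s.erase i).erase j) (fun t => insert i (insert j t))
    · intro s hs
      simp only [Finset.mem_coe, Finset.mem_filter, Finset.mem_powersetCard] at hs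
      simp only [Finset.mem_coe, Finset.mem_powersetCard]
      refine ⟨fun x hx => ?_, ?_⟩
      · simp only [Finset.mem_erase] at hx ⊢
        exact ⟨hx.1, hx.2.1, Finset.mem_univ _⟩
      · rw [Finset.card_erase_of_mem (Finset.mem_erase.mpr ⟨hij.symm, hs.2.2⟩),
          Finset.card_erase_of_mem hs.2.1, hs.1.2]
        omega
    · intro t ht
      simp only [Finset.mem_coe, Finset.mem_powersetCard] at ht
      have hjt : j ∉ t := fun h => (Finset.mem_erase.mp (ht.1 h)).1 rfl
      have hit : i ∉ t := fun h => (Finset.mem_erase.mp (Finset.mem_erase.mp (ht.1 h)).2).1 rfl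
      simp only [Finset.mem_coe, Finset.mem_filter, Finset.mem_powersetCard]
      have hii : i ∉ insert j t := by
        simp only [Finset.mem_insert]
        rintro (h | h)
        · exact hij h
        · exact hit h
      refine ⟨⟨Finset.subset_univ _, ?_⟩, Finset.mem_insert_self _ _,
        Finset.mem_insert_of_mem (Finset.mem_insert_self _ _)⟩
      rw [Finset.card_insert_of_notMem hii, Finset.card_insert_of_notMem hjt, ht.2]
      omega
    · intro s hs
      simp only [Finset.mem_coe, Finset.mem_filter] at hs
      dsimp only
      rw [Finset.insert_erase (Finset.mem_erase.mpr ⟨hij.symm, hs.2.2⟩), Finset.insert_erase hs.2.1]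
    · intro t ht
      simp only [Finset.mem_coe, Finset.mem_powersetCard] at ht
      have hjt : j ∉ t := fun h => (Finset.mem_erase.mp (ht.1 h)).1 rfl
      have hit : i ∉ t := fun h => (Finset.mem_erase.mp (Finset.mem_erase.mp (ht.1 h)).2).1 rfl
      have hii : i ∉ insert j t := by
        simp only [Finset.mem_insert]
        rintro (h | h)
        · exact hij h
        · exact hit h
      dsimp only
      rw [Finset.erase_insert hii, Finset.erase_insert hjt]
  rw [h, Finset.card_powersetCard, Finset.card_erase_of_mem, Finset.card_erase_of_mem
    (Finset.mem_univ _), Finset.card_univ, Fintype.card_fin]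
  · rfl
  · exact Finset.mem_erase.mpr ⟨hij.symm, Finset.mem_univ _⟩

end CliqueGossip

namespace CliqueGossip
variable {n k : ℕ}

lemma sum_ite_univ (s : Finset (Fin n)) (f : Fin n → ℝ) :
    ∑ i, (if i ∈ s then f i else 0) = ∑ i ∈ s, f i := by
  rw [Finset.sum_ite_mem, Finset.univ_inter]

lemma sum_gf (hk2 : 2 ≤ k) (y : Fin n → ℝ) (hy : ∑ i, y i = 0) :
    ∑ s ∈ (Finset.univ : Finset (Fin n)).powersetCard k, gf s y
      = ((k:ℝ)⁻¹ * (((n-1).choose (k-1) : ℝ) - ((n-2).choose (k-2) : ℝ))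
          + ((n.choose k : ℝ) - ((n-1).choose (k-1) : ℝ))) * Qf y := by
  set P := (Finset.univ : Finset (Fin n)).powersetCard k with hP
  have hPcard : P.card = n.choose k := by
    rw [hP, Finset.card_powersetCard, Finset.card_univ, Fintype.card_fin]
  have hk1 : 1 ≤ k := le_trans (by norm_num) hk2
  -- split gf
  have hsplit : ∑ s ∈ P, gf s y
      = (k:ℝ)⁻¹ * (∑ s ∈ P, (∑ i ∈ s, y i)^2) + ∑ s ∈ P, ∑ i ∈ sᶜ, (y i)^2 := by
    rw [Finset.mul_sum, ← Finset.sum_add_distrib]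
    apply Finset.sum_congr rfl
    intro s hs
    have : s.card = k := (Finset.mem_powersetCard.mp hs).2
    rw [gf, this]
  -- part A
  have hA : ∑ s ∈ P, (∑ i ∈ s, y i)^2
      = (((n-1).choose (k-1) : ℝ) - ((n-2).choose (k-2) : ℝ)) * Qf y := by
    have h1 : ∀ s ∈ P, (∑ i ∈ s, y i)^2
        = ∑ i, ∑ j, (if i ∈ s ∧ j ∈ s then y i * y j else 0) := by
      intro s _
      rw [sq, Finset.sum_mul_sum]
      rw [← sum_ite_univ s (fun i => ∑ j ∈ s, y i * y j)]
      apply Finset.sum_congr rfl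
      intro i _
      by_cases hi : i ∈ s
      · simp only [hi, true_and, if_true]
        rw [← sum_ite_univ s (fun j => y i * y j)]
      · simp [hi]
    rw [Finset.sum_congr rfl h1, Finset.sum_comm]
    have hswap : ∀ i : Fin n, ∑ s ∈ P, ∑ j, (if i ∈ s ∧ j ∈ s then y i * y j else 0)
        = ∑ j, ∑ s ∈ P, (if i ∈ s ∧ j ∈ s then y i * y j else 0) := fun i => Finset.sum_comm
    have h2 : ∀ i : Fin n, ∑ j, ∑ s ∈ P, (if i ∈ s ∧ j ∈ s then y i * y j else 0)
        = ∑ j, (if i = j then (((n-1).choose (k-1) : ℝ)) else ((n-2).choose (k-2) : ℝ))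
            * (y i * y j) := by
      intro i
      apply Finset.sum_congr rfl
      intro j _
      rw [← Finset.sum_filter, Finset.sum_const, nsmul_eq_mul]
      congr 1
      by_cases hij : i = j
      · subst hij
        rw [if_pos rfl]
        rw [show P.filter (fun s => i ∈ s ∧ i ∈ s) = P.filter (fun s => i ∈ s) by
          apply Finset.filter_congr; intro s _; simp]
        exact_mod_cast card_filter_mem hk1 i
      · rw [if_neg hij]
        exact_mod_cast card_filter_mem_pair hk2 hij
    rw [Finset.sum_congr rfl (fun i _ => (hswap i).trans (h2 i))]
    have h3 : ∀ i : Fin n,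
        ∑ j, (if i = j then (((n-1).choose (k-1) : ℝ)) else ((n-2).choose (k-2) : ℝ))
            * (y i * y j)
        = ((n-2).choose (k-2) : ℝ) * (y i * ∑ j, y j)
          + ((((n-1).choose (k-1) : ℝ)) - ((n-2).choose (k-2) : ℝ)) * (y i * y i) := by
      intro i
      rw [Finset.mul_sum]
      have : ∀ j : Fin n,
          (if i = j then (((n-1).choose (k-1) : ℝ)) else ((n-2).choose (k-2) : ℝ)) * (y i * y j)
          = ((n-2).choose (k-2) : ℝ) * (y i * y j)
            + (if i = j then ((((n-1).choose (k-1) : ℝ)) - ((n-2).choose (k-2) : ℝ))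
                * (y i * y j) else 0) := by
        intro j
        by_cases hij : i = j <;> simp [hij] <;> ring
      rw [Finset.sum_congr rfl (fun j _ => this j), Finset.sum_add_distrib,
        Finset.sum_ite_eq, if_pos (Finset.mem_univ i), Finset.mul_sum]
    rw [Finset.sum_congr rfl (fun i _ => h3 i), Finset.sum_add_distrib]
    have h4 : ∑ i : Fin n, ((n-2).choose (k-2) : ℝ) * (y i * ∑ j, y j) = 0 := by
      simp [hy]
    rw [h4, zero_add, ← Finset.mul_sum]
    congr 1
    apply Finset.sum_congr rfl
    intro i _
    ring
  -- part B
  have hB : ∑ s ∈ P, ∑ i ∈ sᶜ, (y i)^2 = ((n.choose k : ℝ) - ((n-1).choose (k-1) : ℝ)) * Qf y := by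
    have h1 : ∀ s ∈ P, ∑ i ∈ sᶜ, (y i)^2 = ∑ i, (if i ∈ sᶜ then (y i)^2 else 0) := by
      intro s _
      rw [sum_ite_univ]
    rw [Finset.sum_congr rfl h1, Finset.sum_comm]
    have hswap : ∀ i : Fin n, ∑ s ∈ P, ∑ j, (if i ∈ s ∧ j ∈ s then y i * y j else 0)
        = ∑ j, ∑ s ∈ P, (if i ∈ s ∧ j ∈ s then y i * y j else 0) := fun i => Finset.sum_comm
    have h2 : ∀ i : Fin n, ∑ s ∈ P, (if i ∈ sᶜ then (y i)^2 else 0)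
        = ((n.choose k : ℝ) - ((n-1).choose (k-1) : ℝ)) * (y i)^2 := by
      intro i
      rw [← Finset.sum_filter, Finset.sum_const, nsmul_eq_mul]
      congr 1
      have hcc : (P.filter (fun s => i ∈ sᶜ)) = P.filter (fun s => i ∉ s) := by
        apply Finset.filter_congr; intro s _; simp
      have hcount : (P.filter (fun s => i ∈ s)).card + (P.filter (fun s => i ∉ s)).card
          = P.card := by
        simpa using Finset.card_filter_add_card_filter_not
          (s := P) (p := fun s => i ∈ s)
      rw [hcc]
      have he1 : (P.filter (fun s => i ∈ s)).card = (n-1).choose (k-1) :=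
        card_filter_mem (n := n) hk1 i
      have hle : (P.filter (fun s => i ∉ s)).card
          = n.choose k - (n-1).choose (k-1) := by omega
      rw [hle]
      have hchle : (n-1).choose (k-1) ≤ n.choose k := by
        have := Finset.card_filter_le P (fun s => i ∈ s)
        omega
      push_cast [hchle]
      ring
    rw [Finset.sum_congr rfl (fun i _ => h2 i), ← Finset.mul_sum]
    rfl
  rw [hsplit, hA, hB]
  ring

end CliqueGossip

namespace CliqueGossip
variable {n k : ℕ}

lemma choose_mono_aux (hn : 3 ≤ n) (hk2 : 2 ≤ k) :
    (n-2).choose (k-2) ≤ (n-1).choose (k-1) ∧ (n-1).choose (k-1) ≤ n.choose k := by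
  constructor
  · have e : (n-1).choose (k-1) = (n-2).choose (k-2) + (n-2).choose ((k-2)+1) := by
      rw [show n-1 = (n-2)+1 by omega, show k-1 = (k-2)+1 by omega, Nat.choose_succ_succ]
    omega
  · have e : n.choose k = (n-1).choose (k-1) + (n-1).choose ((k-1)+1) := by
      rw [show n = (n-1)+1 by omega, show k = (k-1)+1 by omega, Nat.choose_succ_succ]
      congr 2 <;> omega
    omega

lemma lam_bounds (hn : 3 ≤ n) (hk2 : 2 ≤ k) (hkn : k ≤ n - 1) :
    0 ≤ (k:ℝ)⁻¹ * (((n-1).choose (k-1) : ℝ) - ((n-2).choose (k-2) : ℝ))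
        + ((n.choose k : ℝ) - ((n-1).choose (k-1) : ℝ))
    ∧ (k:ℝ)⁻¹ * (((n-1).choose (k-1) : ℝ) - ((n-2).choose (k-2) : ℝ))
        + ((n.choose k : ℝ) - ((n-1).choose (k-1) : ℝ)) < (n.choose k : ℝ) := by
  obtain ⟨h12, h1C⟩ := choose_mono_aux hn hk2
  have hN2N1 : ((n-2).choose (k-2) : ℝ) ≤ ((n-1).choose (k-1) : ℝ) := by exact_mod_cast h12
  have hN1C : ((n-1).choose (k-1) : ℝ) ≤ (n.choose k : ℝ) := by exact_mod_cast h1C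
  have hN1pos : (0:ℝ) < ((n-1).choose (k-1) : ℝ) := by
    have : 0 < (n-1).choose (k-1) := Nat.choose_pos (by omega)
    exact_mod_cast this
  have hN2nn : (0:ℝ) ≤ ((n-2).choose (k-2) : ℝ) := by positivity
  have hkR : (2:ℝ) ≤ (k:ℝ) := by exact_mod_cast hk2
  have hkpos : (0:ℝ) < (k:ℝ) := by linarith
  have hinvpos : (0:ℝ) < (k:ℝ)⁻¹ := inv_pos.mpr hkpos
  have hinvle : (k:ℝ)⁻¹ ≤ 1/2 := by
    rw [inv_le_comm₀ hkpos (by norm_num)]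
    linarith
  constructor
  · have := mul_nonneg hinvpos.le (sub_nonneg.mpr hN2N1)
    linarith
  · have h1 : (k:ℝ)⁻¹ * (((n-1).choose (k-1) : ℝ) - ((n-2).choose (k-2) : ℝ))
        ≤ (1/2) * (((n-1).choose (k-1) : ℝ) - ((n-2).choose (k-2) : ℝ)) :=
      mul_le_mul_of_nonneg_right hinvle (sub_nonneg.mpr hN2N1)
    nlinarith

/-- Deterministic evolution map. -/
noncomputable def seqX (n : ℕ) (x0 : Fin n → ℝ) : ℕ → (ℕ → Finset (Fin n)) → (Fin n → ℝ)
  | 0, _ => x0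
  | (t+1), σ => cliqueW n (σ t) *ᵥ seqX n x0 t σ

lemma seqX_congr (x0 : Fin n → ℝ) (t : ℕ) {σ σ' : ℕ → Finset (Fin n)}
    (h : ∀ i < t, σ i = σ' i) : seqX n x0 t σ = seqX n x0 t σ' := by
  induction t with
  | zero => rfl
  | succ t ih =>
    rw [seqX, seqX, h t (Nat.lt_succ_self t), ih (fun i hi => h i (Nat.lt_succ_of_lt hi))]

end CliqueGossip

open CliqueGossip

/-- Theorem 3 (almost-sure convergence): with `(S_t)` i.i.d. uniform over the `k`-element
subsets of `{1,…,n}` and `x(t+1) = W_{S_t} x(t)`, almost surely `x(t) → x̄·𝟙` where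
`x̄ = (1/n)Σ_j x_j(0)`. -/
theorem randomized_clique_gossip_as_convergence
    {n k : ℕ} (hn : 3 ≤ n) (hk : 2 ≤ k) (hkn : k ≤ n - 1)
    {Ω : Type*} [MeasurableSpace Ω] (μ : Measure Ω) [IsProbabilityMeasure μ]
    (S : ℕ → Ω → Finset (Fin n)) (hmeas : ∀ t, Measurable (S t))
    (hindep : iIndepFun S μ)
    (hvals : ∀ t ω, (S t ω).card = k)
    (hunif : ∀ t, ∀ s : Finset (Fin n), s.card = k →
      μ {ω | S t ω = s} = ((n.choose k : ℝ≥0∞))⁻¹)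
    (x0 : Fin n → ℝ)
    (X : ℕ → Ω → Fin n → ℝ) (hX0 : ∀ ω, X 0 ω = x0)
    (hXrec : ∀ t ω, X (t + 1) ω = cliqueW n (S t ω) *ᵥ X t ω) :
    ∀ᵐ ω ∂μ, Tendsto (fun t => X t ω) atTop (nhds fun _ => (∑ j, x0 j) / n) := by
  classical
  haveI : MeasurableSingletonClass (Finset (Fin n)) := ⟨fun _ => trivial⟩
  set c : ℝ := (∑ j, x0 j) / n with hc
  have hncast : (n:ℝ) ≠ 0 := Nat.cast_ne_zero.mpr (by omega)
  have hcard : ∀ t ω, (S t ω).card ≠ 0 := fun t ω => by rw [hvals]; omega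
  set y : ℕ → Ω → Fin n → ℝ := fun t ω i => X t ω i - c with hydef
  set y0 : Fin n → ℝ := fun i => x0 i - c with hy0def
  have hy0 : ∀ ω, y 0 ω = y0 := fun ω => by
    funext i; simp only [hydef, hy0def, hX0]
  have hyrec : ∀ t ω, y (t+1) ω = cliqueW n (S t ω) *ᵥ (y t ω) := by
    intro t ω
    have h1 : y (t+1) ω = fun i => (cliqueW n (S t ω) *ᵥ X t ω) i - c := by
      funext i; simp only [hydef]; rw [hXrec]
    rw [h1, cliqueW_mulVec_sub_const _ (hcard t ω)]
  have hysum : ∀ t ω, ∑ i, y t ω i = 0 := by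
    intro t
    induction t with
    | zero =>
      intro ω
      rw [hy0]
      simp only [hy0def]
      rw [Finset.sum_sub_distrib, Finset.sum_const, Finset.card_univ, Fintype.card_fin,
        nsmul_eq_mul, hc]
      field_simp
      ring
    | succ t ih =>
      intro ω
      rw [hyrec t ω, sum_cliqueW _ (hcard t ω)]
      exact ih ω
  have hQrec : ∀ t ω, Qf (y (t+1) ω) = gf (S t ω) (y t ω) := fun t ω => by
    rw [hyrec]; exact Qf_cliqueW _ (hcard t ω) _
  have hQbound : ∀ t ω, Qf (y t ω) ≤ Qf y0 := by
    intro t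
    induction t with
    | zero => intro ω; rw [hy0]
    | succ t ih => intro ω; rw [hQrec]; exact le_trans (gf_le_Qf _ _) (ih ω)
  have hQnn : ∀ t ω, 0 ≤ Qf (y t ω) := fun t ω => Qf_nonneg _
  have hQ0nn : 0 ≤ Qf y0 := Qf_nonneg _
  -- measurability
  have hXmeas : ∀ t, Measurable (X t) := by
    intro t
    induction t with
    | zero =>
      have h : X 0 = fun _ => x0 := funext hX0
      rw [h]; exact measurable_const
    | succ t ih =>
      have h : X (t+1) = fun ω => cliqueW n (S t ω) *ᵥ X t ω := funext (hXrec t)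
      rw [h]
      apply measurable_pi_lambda
      intro i
      have h2 : (fun ω => (cliqueW n (S t ω) *ᵥ X t ω) i)
          = fun ω => ∑ j, cliqueW n (S t ω) i j * X t ω j := rfl
      rw [h2]
      apply Finset.measurable_sum
      intro j _
      exact ((measurable_of_countable (fun f : Finset (Fin n) => cliqueW n f i j)).comp
        (hmeas t)).mul ((measurable_pi_apply j).comp ih)
  have hymeasc : ∀ t i, Measurable (fun ω => y t ω i) := fun t i =>
    ((measurable_pi_apply i).comp (hXmeas t)).sub measurable_const
  have hQmeas : ∀ t, Measurable (fun ω => Qf (y t ω)) := by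
    intro t
    exact Finset.measurable_sum _ (fun i _ => (hymeasc t i).pow_const 2)
  have hgmeas : ∀ t s, Measurable (fun ω => gf s (y t ω)) := by
    intro t s
    exact (measurable_const.mul ((Finset.measurable_sum _
      (fun i _ => hymeasc t i)).pow_const 2)).add
      (Finset.measurable_sum _ (fun i _ => (hymeasc t i).pow_const 2))
  have hQint : ∀ t, Integrable (fun ω => Qf (y t ω)) μ := by
    intro t
    apply Integrable.mono' (integrable_const (Qf y0)) (hQmeas t).aestronglyMeasurable
    filter_upwards with ω
    rw [Real.norm_eq_abs, abs_of_nonneg (hQnn t ω)]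
    exact hQbound t ω
  have hgint : ∀ t s, Integrable (fun ω => gf s (y t ω)) μ := by
    intro t s
    apply Integrable.mono' (integrable_const (Qf y0)) (hgmeas t s).aestronglyMeasurable
    filter_upwards with ω
    rw [Real.norm_eq_abs, abs_of_nonneg (gf_nonneg _ _)]
    exact le_trans (gf_le_Qf _ _) (hQbound t ω)
  -- constants
  obtain ⟨hml0, hmlC⟩ := lam_bounds hn hk hkn
  set N1 : ℝ := ((n-1).choose (k-1) : ℝ) with hN1
  set N2 : ℝ := ((n-2).choose (k-2) : ℝ) with hN2
  set CC : ℝ := (n.choose k : ℝ) with hCC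
  have hCpos : (0:ℝ) < CC := by
    have h : 0 < n.choose k := Nat.choose_pos (by omega)
    rw [hCC]; exact_mod_cast h
  set ml : ℝ := (k:ℝ)⁻¹ * (N1 - N2) + (CC - N1) with hml
  set lam : ℝ := ml / CC with hlam
  have hlam0 : 0 ≤ lam := div_nonneg hml0 hCpos.le
  have hlam1 : lam < 1 := (div_lt_one hCpos).mpr hmlC
  -- representation of the process by the deterministic map
  have hXD : ∀ t ω, X t ω = seqX n x0 t (fun m => S m ω) := by
    intro t
    induction t with
    | zero => intro ω; rw [hX0]; rfl
    | succ t ih => intro ω; rw [hXrec, ih ω]; rfl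
  -- key independence step
  have key : ∀ (t : ℕ) (s : Finset (Fin n)), s ∈ (Finset.univ : Finset (Fin n)).powersetCard k →
      ∫ ω, (if S t ω = s then (1:ℝ) else 0) * gf s (y t ω) ∂μ
        = CC⁻¹ * ∫ ω, gf s (y t ω) ∂μ := by
    intro t s hsP
    have hs : s.card = k := (Finset.mem_powersetCard.mp hsP).2
    set u : Ω → ℝ := fun ω => if S t ω = s then (1:ℝ) else 0 with hu
    set v : Ω → ℝ := fun ω => gf s (y t ω) with hv
    have humeas : Measurable u := by
      have : u = (fun f : Finset (Fin n) => if f = s then (1:ℝ) else 0) ∘ (S t) := rfl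
      rw [this]
      exact (measurable_of_countable _).comp (hmeas t)
    have huint : Integrable u μ := by
      apply Integrable.mono' (integrable_const (1:ℝ)) humeas.aestronglyMeasurable
      filter_upwards with ω
      rw [hu, Real.norm_eq_abs]
      by_cases h : S t ω = s <;> simp [h]
    -- independence
    have hd : Disjoint (Finset.range t) ({t} : Finset ℕ) := by
      simp [Finset.disjoint_singleton_right]
    have h0 := hindep.indepFun_finset (Finset.range t) {t} hd hmeas
    set φ : (↥(Finset.range t) → Finset (Fin n)) → ℝ := fun f =>
      gf s (fun i => seqX n x0 t (fun m => if h : m ∈ Finset.range t then f ⟨m, h⟩ else ∅) i - c)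
      with hφ
    set ψ : (↥({t} : Finset ℕ) → Finset (Fin n)) → ℝ := fun f =>
      if f ⟨t, Finset.mem_singleton_self t⟩ = s then (1:ℝ) else 0 with hψ
    have h1 : IndepFun (φ ∘ fun ω (i : ↥(Finset.range t)) => S i ω)
        (ψ ∘ fun ω (i : ↥({t} : Finset ℕ)) => S i ω) μ :=
      h0.comp (measurable_of_countable φ) (measurable_of_countable ψ)
    have hφeq : (φ ∘ fun ω (i : ↥(Finset.range t)) => S i ω) = v := by
      funext ω
      have hσ : seqX n x0 t (fun m => if h : m ∈ Finset.range t then S m ω else ∅)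
          = seqX n x0 t (fun m => S m ω) :=
        seqX_congr x0 t (fun i hi => dif_pos (Finset.mem_range.mpr hi))
      simp only [Function.comp_apply, hφ, hv, hydef]
      rw [hσ, ← hXD t ω]
    have hψeq : (ψ ∘ fun ω (i : ↥({t} : Finset ℕ)) => S i ω) = u := rfl
    rw [hφeq, hψeq] at h1
    have h2 : ∫ ω, u ω * v ω ∂μ = (∫ ω, u ω ∂μ) * ∫ ω, v ω ∂μ :=
      IndepFun.integral_fun_mul_eq_mul_integral h1.symm huint.aestronglyMeasurable
        (hgint t s).aestronglyMeasurable
    have h3 : ∫ ω, u ω ∂μ = CC⁻¹ := by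
      have hA : MeasurableSet {ω | S t ω = s} := hmeas t (measurableSet_singleton s)
      have hind : u = ({ω | S t ω = s} : Set Ω).indicator (fun _ => (1:ℝ)) := by
        funext ω
        by_cases h : S t ω = s <;> simp [hu, h, Set.indicator]
      rw [hind, integral_indicator_const _ hA, Measure.real, hunif t s hs, smul_eq_mul, mul_one,
        ENNReal.toReal_inv, hCC]
      norm_num
    calc ∫ ω, u ω * v ω ∂μ = (∫ ω, u ω ∂μ) * ∫ ω, v ω ∂μ := h2
      _ = CC⁻¹ * ∫ ω, v ω ∂μ := by rw [h3]
  -- one-step contraction in expectation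
  have hstep : ∀ t, ∫ ω, Qf (y (t+1) ω) ∂μ = lam * ∫ ω, Qf (y t ω) ∂μ := by
    intro t
    set P := (Finset.univ : Finset (Fin n)).powersetCard k with hP
    have e1 : (fun ω => Qf (y (t+1) ω))
        = fun ω => ∑ s ∈ P, (if S t ω = s then (1:ℝ) else 0) * gf s (y t ω) := by
      funext ω
      rw [hQrec t ω]
      have hmem : S t ω ∈ P := Finset.mem_powersetCard.mpr ⟨Finset.subset_univ _, hvals t ω⟩
      rw [eq_comm]
      calc ∑ s ∈ P, (if S t ω = s then (1:ℝ) else 0) * gf s (y t ω)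
          = ∑ s ∈ P, (if S t ω = s then gf s (y t ω) else 0) := by
            apply Finset.sum_congr rfl; intros; split <;> simp
        _ = gf (S t ω) (y t ω) := by rw [Finset.sum_ite_eq, if_pos hmem]
    have hintuv : ∀ s ∈ P, Integrable (fun ω => (if S t ω = s then (1:ℝ) else 0)
        * gf s (y t ω)) μ := by
      intro s _
      have hm : Measurable (fun ω => (if S t ω = s then (1:ℝ) else 0) * gf s (y t ω)) := by
        exact (((measurable_of_countable (fun f : Finset (Fin n) => if f = s then (1:ℝ) else 0)).comp
          (hmeas t))).mul (hgmeas t s)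
      apply Integrable.mono' (integrable_const (Qf y0)) hm.aestronglyMeasurable
      filter_upwards with ω
      rw [Real.norm_eq_abs]
      by_cases h : S t ω = s
      · rw [h, if_pos rfl, one_mul, abs_of_nonneg (gf_nonneg _ _)]
        exact le_trans (gf_le_Qf _ _) (hQbound t ω)
      · simp [h, hQ0nn]
    rw [e1, integral_finset_sum P hintuv, Finset.sum_congr rfl (key t)]
    rw [← Finset.mul_sum, ← integral_finset_sum P (fun s _ => hgint t s)]
    have e2 : (fun ω => ∑ s ∈ P, gf s (y t ω)) = fun ω => ml * Qf (y t ω) := by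
      funext ω
      rw [hml]
      exact sum_gf hk (y t ω) (hysum t ω)
    rw [e2, integral_const_mul, hlam]
    ring
  -- iterate
  have hiter : ∀ t, ∫ ω, Qf (y t ω) ∂μ = lam^t * Qf y0 := by
    intro t
    induction t with
    | zero =>
      have h : (fun ω => Qf (y 0 ω)) = fun _ => Qf y0 := by
        funext ω; rw [hy0]
      rw [h, integral_const, pow_zero, one_mul, Measure.real, measure_univ, ENNReal.toReal_one, one_smul]
    | succ t ih =>
      rw [hstep t, ih, pow_succ]
      ring
  -- summability of Q along trajectories, a.e.
  have hlin : ∀ t, ∫⁻ ω, ENNReal.ofReal (Qf (y t ω)) ∂μ = ENNReal.ofReal (lam^t * Qf y0) := by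
    intro t
    rw [← ofReal_integral_eq_lintegral_ofReal (hQint t)
      (Filter.Eventually.of_forall (hQnn t)), hiter t]
  have htsum : ∫⁻ ω, ∑' t, ENNReal.ofReal (Qf (y t ω)) ∂μ ≠ ⊤ := by
    rw [lintegral_tsum (fun t => ((hQmeas t).ennreal_ofReal).aemeasurable)]
    have h : ∑' t, ∫⁻ ω, ENNReal.ofReal (Qf (y t ω)) ∂μ
        = ∑' t, ENNReal.ofReal (Qf y0) * (ENNReal.ofReal lam)^t := by
      apply tsum_congr
      intro t
      rw [hlin t, mul_comm (lam^t), ENNReal.ofReal_mul hQ0nn, ENNReal.ofReal_pow hlam0]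
    rw [h, ENNReal.tsum_mul_left, ENNReal.tsum_geometric]
    apply ENNReal.mul_ne_top ENNReal.ofReal_ne_top
    rw [Ne, ENNReal.inv_eq_top, tsub_eq_zero_iff_le]
    exact fun hcon => absurd (lt_of_lt_of_le (ENNReal.ofReal_lt_one.mpr hlam1) hcon) (lt_irrefl _)
  have hae : ∀ᵐ ω ∂μ, (∑' t, ENNReal.ofReal (Qf (y t ω))) < ⊤ :=
    ae_lt_top (Measurable.ennreal_tsum (fun t => (hQmeas t).ennreal_ofReal)) htsum
  filter_upwards [hae] with ω hω
  -- from summability to convergence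
  have hsummable : Summable (fun t => Qf (y t ω)) := by
    have h1 : Summable (fun t => (ENNReal.ofReal (Qf (y t ω))).toReal) :=
      ENNReal.summable_toReal hω.ne
    have h2 : (fun t => (ENNReal.ofReal (Qf (y t ω))).toReal) = fun t => Qf (y t ω) := by
      funext t; rw [ENNReal.toReal_ofReal (hQnn t ω)]
    rwa [h2] at h1
  have hQ0' : Tendsto (fun t => Qf (y t ω)) atTop (nhds 0) := hsummable.tendsto_atTop_zero
  rw [tendsto_pi_nhds]
  intro i
  have hsq : Tendsto (fun t => (y t ω i)^2) atTop (nhds 0) := by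
    apply squeeze_zero (fun t => sq_nonneg _) (fun t => ?_) hQ0'
    exact Finset.single_le_sum (f := fun j => (y t ω j)^2) (fun j _ => sq_nonneg _)
      (Finset.mem_univ i)
  have habs : Tendsto (fun t => |y t ω i|) atTop (nhds 0) := by
    have h1 : Tendsto (fun t => Real.sqrt ((y t ω i)^2)) atTop (nhds (Real.sqrt 0)) :=
      (Real.continuous_sqrt.tendsto 0).comp hsq
    rw [Real.sqrt_zero] at h1
    convert h1 using 2 with t
    rw [Real.sqrt_sq_eq_abs]
  have hyi : Tendsto (fun t => y t ω i) atTop (nhds 0) :=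
    (tendsto_zero_iff_abs_tendsto_zero _).mpr habs
  have hXi : Tendsto (fun t => X t ω i) atTop (nhds c) := by
    have h1 : (fun t => X t ω i) = fun t => y t ω i + c := by
      funext t; simp [hydef]
    rw [h1]
    simpa using hyi.add_const c
  exact hXi
end
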